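/- arXiv:1705.10502 — 5 statements merged into one kernel-verified Lean document; each statement's English description precedes it below -/
import Mathlib

section
/- Let C(U), C(X), C(Z) be pretriangulated categories related by gluing and equipped with weight structures compatible with the gluing. Let α ≤ 0 and β ≥ 1 be integers, let M_U ∈ C(U)_{w=0} be such that i^* j_* M_U is without weights α, α+1, …, β, and let M ∈ C(X)_{w=0,i^*w≤−1,i^!w≥1} satisfy j^* M ≅ M_U. Then: (a) in the distinguished triangle (i_* i^* M)[−1] → j_! M_U → M → i_* i^* M obtained from the localization triangle, one has (i_* i^* M)[−1] ∈ C(X)_{w≤α−2}, so this triangle is a weight filtration of j_! M_U avoiding weights α−1, α, …, −1; (b) in the distinguished triangle M → j_* M_U → (i_* i^! M)[1] → M[1], one has (i_* i^! M)[1] ∈ C(X)_{w≥β+1}, so this triangle is a weight filtration of j_* M_U avoiding weights 1, 2, …, β. Consequently, for any weight-exact exact functor a : C(X) → D to a pretriangulated category with weight structure, a(j_! M_U) is without weights α−1, …, −1 and a(j_* M_U) is without weights 1, …, β. (Theorem 2G (a), (b), abstract form.) -/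
set_option linter.unusedVariables false

open CategoryTheory Limits Pretriangulated

universe w₁ w₂ w₃ w₄ v₁ v₂ v₃ v₄ u₁ u₂ u₃ u₄

/-- A weight structure on a pretriangulated category `C`: a pair of classes of objects
`(C_{w≤0}, C_{w≥0})`, each containing the zero objects and closed under isomorphisms and
retracts (direct summands), such that `C_{w≤0}[-1] ⊆ C_{w≤0}`, `C_{w≥0}[1] ⊆ C_{w≥0}`,
`Hom(A, B[1]) = 0` for `A ∈ C_{w≤0}`, `B ∈ C_{w≥0}`, and every object admits a weight
filtration. -/
structure WeightStructure (C : Type*) [Category C] [HasZeroObject C] [Preadditive C]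
    [HasShift C ℤ] [∀ n : ℤ, (shiftFunctor C n).Additive] [Pretriangulated C] where
  le : C → Prop
  ge : C → Prop
  le_zero : ∀ X : C, IsZero X → le X
  ge_zero : ∀ X : C, IsZero X → ge X
  le_iso : ∀ {X Y : C}, (X ≅ Y) → le X → le Y
  ge_iso : ∀ {X Y : C}, (X ≅ Y) → ge X → ge Y
  le_retract : ∀ {X Y : C} (s : X ⟶ Y) (r : Y ⟶ X), s ≫ r = 𝟙 X → le Y → le X
  ge_retract : ∀ {X Y : C} (s : X ⟶ Y) (r : Y ⟶ X), s ≫ r = 𝟙 X → ge Y → ge X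
  le_shift : ∀ X : C, le X → le (X⟦(-1 : ℤ)⟧)
  ge_shift : ∀ X : C, ge X → ge (X⟦(1 : ℤ)⟧)
  orth : ∀ {A B : C} (f : A ⟶ B⟦(1 : ℤ)⟧), le A → ge B → f = 0
  exists_weight_filtration : ∀ M : C, ∃ (A B : C) (f : A ⟶ M) (g : M ⟶ B)
    (h : B ⟶ A⟦(1 : ℤ)⟧), (Triangle.mk f g h ∈ distTriang C) ∧ le A ∧ ge (B⟦(-1 : ℤ)⟧)

namespace WeightStructure

variable {C : Type*} [Category C] [HasZeroObject C] [Preadditive C]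
    [HasShift C ℤ] [∀ n : ℤ, (shiftFunctor C n).Additive] [Pretriangulated C]

/-- `X ∈ C_{w ≤ n}`, i.e. `X[-n] ∈ C_{w ≤ 0}`. -/
def leW (w : WeightStructure C) (n : ℤ) (X : C) : Prop := w.le (X⟦(-n : ℤ)⟧)

/-- `X ∈ C_{w ≥ n}`, i.e. `X[-n] ∈ C_{w ≥ 0}`. -/
def geW (w : WeightStructure C) (n : ℤ) (X : C) : Prop := w.ge (X⟦(-n : ℤ)⟧)

/-- The heart `C_{w = 0}`. -/
def heart (w : WeightStructure C) (X : C) : Prop := w.le X ∧ w.ge X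

/-- `M` is without weights `m, …, n`: there is a distinguished triangle
`M_{≤ m-1} → M → M_{≥ n+1} → M_{≤ m-1}[1]` with `M_{≤ m-1} ∈ C_{w ≤ m-1}` and
`M_{≥ n+1} ∈ C_{w ≥ n+1}` (a weight filtration avoiding weights `m, …, n`). -/
def WithoutWeights (w : WeightStructure C) (m n : ℤ) (M : C) : Prop :=
  ∃ (A B : C) (f : A ⟶ M) (g : M ⟶ B) (h : B ⟶ A⟦(1 : ℤ)⟧),
    (Triangle.mk f g h ∈ distTriang C) ∧ w.leW (m - 1) A ∧ w.geW (n + 1) B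

end WeightStructure


namespace WeightStructure

variable {C : Type*} [Category C] [HasZeroObject C] [Preadditive C]
    [HasShift C ℤ] [∀ n : ℤ, (shiftFunctor C n).Additive] [Pretriangulated C]

lemma le_shift_of_le (w : WeightStructure C) {X : C} {m n : ℤ} (h : n ≤ m) :
    w.le (X⟦m⟧) → w.le (X⟦n⟧) :=
  Int.le_induction (motive := fun k _ => w.le (X⟦k⟧) → w.le (X⟦n⟧)) id
    (fun k _ ih hX => ih (w.le_iso ((shiftFunctorAdd' C (k + 1) (-1) k (by ring)).app X).symm
      (w.le_shift _ hX))) m h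

lemma ge_shift_of_ge (w : WeightStructure C) {X : C} {m n : ℤ} (h : m ≤ n) :
    w.ge (X⟦m⟧) → w.ge (X⟦n⟧) :=
  fun hX => Int.le_induction (motive := fun k _ => w.ge (X⟦k⟧)) hX
    (fun k _ ih => w.ge_iso ((shiftFunctorAdd' C k 1 (k + 1) rfl).app X).symm
      (w.ge_shift _ ih)) n h

lemma hom_zero (w : WeightStructure C) {X Y : C} {p q : ℤ} (hpq : q < p)
    (hX : w.le (X⟦p⟧)) (hY : w.ge (Y⟦q⟧)) (f : X ⟶ Y) : f = 0 := by
  have hX' : w.le (X⟦q + 1⟧) := w.le_shift_of_le (by omega) hX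
  have h0 : (shiftFunctor C (q + 1)).map f ≫ (shiftFunctorAdd' C q 1 (q + 1) rfl).hom.app Y
      = 0 := w.orth _ hX' hY
  have h1 : (shiftFunctor C (q + 1)).map f = 0 := by
    rw [← cancel_mono ((shiftFunctorAdd' C q 1 (q + 1) rfl).hom.app Y)]
    simpa using h0
  apply (shiftFunctor C (q + 1)).map_injective
  simpa using h1

end WeightStructure

/-- A weight-exact (exact) functor between pretriangulated categories equipped with
weight structures: `F(C_{w≤0}) ⊆ D_{w≤0}` and `F(C_{w≥0}) ⊆ D_{w≥0}`. -/
def WeightExact {C : Type*} [Category C] [HasZeroObject C] [Preadditive C]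
    [HasShift C ℤ] [∀ n : ℤ, (shiftFunctor C n).Additive] [Pretriangulated C]
    {D : Type*} [Category D] [HasZeroObject D] [Preadditive D]
    [HasShift D ℤ] [∀ n : ℤ, (shiftFunctor D n).Additive] [Pretriangulated D]
    (wC : WeightStructure C) (wD : WeightStructure D) (F : C ⥤ D) : Prop :=
  (∀ X : C, wC.le X → wD.le (F.obj X)) ∧ (∀ X : C, wC.ge X → wD.ge (F.obj X))

variable {CU : Type*} [Category CU] [HasZeroObject CU] [Preadditive CU]
  [HasShift CU ℤ] [∀ n : ℤ, (shiftFunctor CU n).Additive] [Pretriangulated CU]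
variable {CX : Type*} [Category CX] [HasZeroObject CX] [Preadditive CX]
  [HasShift CX ℤ] [∀ n : ℤ, (shiftFunctor CX n).Additive] [Pretriangulated CX]
variable {CZ : Type*} [Category CZ] [HasZeroObject CZ] [Preadditive CZ]
  [HasShift CZ ℤ] [∀ n : ℤ, (shiftFunctor CZ n).Additive] [Pretriangulated CZ]

/- The six gluing functors: `jl = j_!`, `js = j^*`, `jr = j_*`,
   `il = i^*`, `im = i_*`, `ir = i^!`; all of them are exact. -/
variable (jl : CU ⥤ CX) (js : CX ⥤ CU) (jr : CU ⥤ CX)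
  (il : CX ⥤ CZ) (im : CZ ⥤ CX) (ir : CX ⥤ CZ)
  [jl.CommShift ℤ] [jl.IsTriangulated] [js.CommShift ℤ] [js.IsTriangulated]
  [jr.CommShift ℤ] [jr.IsTriangulated] [il.CommShift ℤ] [il.IsTriangulated]
  [im.CommShift ℤ] [im.IsTriangulated] [ir.CommShift ℤ] [ir.IsTriangulated]
  [im.Full] [im.Faithful]
variable (adj₁ : jl ⊣ js) (adj₂ : js ⊣ jr) (adj₃ : il ⊣ im) (adj₄ : im ⊣ ir)

/-- The axioms of a gluing ("recollement") situation relating `C(U)`, `C(X)` and `C(Z)`: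
`j^* ∘ i_* = 0`, the unit `id → j^* j_!` and the counit `j^* j_* → id` are isomorphisms,
and the two localization triangles `j_! j^* M → M → i_* i^* M → (j_! j^* M)[1]` and
`i_* i^! M → M → j_* j^* M → (i_* i^! M)[1]` are distinguished.
(Full faithfulness of `i_*` is part of the ambient variable context.) -/
structure IsGluing : Prop where
  js_im_zero : ∀ Z : CZ, IsZero (js.obj (im.obj Z))
  unit_iso : IsIso adj₁.unit
  counit_iso : IsIso adj₂.counit
  tri₁ : ∀ M : CX, ∃ δ : im.obj (il.obj M) ⟶ (jl.obj (js.obj M))⟦(1 : ℤ)⟧,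
    Triangle.mk (adj₁.counit.app M) (adj₃.unit.app M) δ ∈ distTriang CX
  tri₂ : ∀ M : CX, ∃ δ : jr.obj (js.obj M) ⟶ (im.obj (ir.obj M))⟦(1 : ℤ)⟧,
    Triangle.mk (adj₄.counit.app M) (adj₂.unit.app M) δ ∈ distTriang CX

variable (wU : WeightStructure CU) (wX : WeightStructure CX) (wZ : WeightStructure CZ)

/-- Compatibility of the weight structures on `C(U)`, `C(X)`, `C(Z)` with the gluing:
the left adjoints `j_!`, `j^*`, `i^*`, `i_*` respect `(w ≤ 0)`, and the right adjoints
`j^*`, `j_*`, `i_*`, `i^!` respect `(w ≥ 0)`. -/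
structure GluedWeights : Prop where
  jl_le : ∀ X : CU, wU.le X → wX.le (jl.obj X)
  js_le : ∀ X : CX, wX.le X → wU.le (js.obj X)
  js_ge : ∀ X : CX, wX.ge X → wU.ge (js.obj X)
  il_le : ∀ X : CX, wX.le X → wZ.le (il.obj X)
  im_le : ∀ X : CZ, wZ.le X → wX.le (im.obj X)
  im_ge : ∀ X : CZ, wZ.ge X → wX.ge (im.obj X)
  jr_ge : ∀ X : CU, wU.ge X → wX.ge (jr.obj X)
  ir_ge : ∀ X : CX, wX.ge X → wZ.ge (ir.obj X)

/-- **Theorem 2G (a), (b), abstract form.** Let `M_U ∈ C(U)_{w=0}` with `i^* j_* M_U`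
without weights `α, …, β` (`α ≤ 0 ≤ 1 ≤ β`), and let `M = j_{!*} M_U`, i.e.
`M ∈ C(X)_{w=0, i^*w ≤ -1, i^!w ≥ 1}` with `j^* M ≅ M_U`. Then
`(i_* i^* M)[-1] ∈ C(X)_{w ≤ α-2}` and there is a distinguished triangle
`(i_* i^* M)[-1] → j_! M_U → M → i_* i^* M`, a weight filtration of `j_! M_U` avoiding
weights `α-1, …, -1`; dually `(i_* i^! M)[1] ∈ C(X)_{w ≥ β+1}` and there is a
distinguished triangle `M → j_* M_U → (i_* i^! M)[1] → M[1]`, a weight filtration of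
`j_* M_U` avoiding weights `1, …, β`. Consequently, for any weight-exact exact functor
`a : C(X) → D`, `a(j_! M_U)` is without weights `α-1, …, -1` and `a(j_* M_U)` is without
weights `1, …, β`. -/
theorem weight_filtrations_of_jl_and_jr
    (hglue : IsGluing jl js jr il im ir adj₁ adj₂ adj₃ adj₄)
    (hw : GluedWeights jl js jr il im ir wU wX wZ)
    {D : Type*} [Category D] [HasZeroObject D] [Preadditive D]
    [HasShift D ℤ] [∀ n : ℤ, (shiftFunctor D n).Additive] [Pretriangulated D]
    (wD : WeightStructure D)
    (a : CX ⥤ D) [a.CommShift ℤ] [a.IsTriangulated] (ha : WeightExact wX wD a)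
    (α β : ℤ) (hα : α ≤ 0) (hβ : 1 ≤ β)
    (MU : CU) (hMU : wU.heart MU)
    (hav : wZ.WithoutWeights α β (il.obj (jr.obj MU)))
    (M : CX) (hM : wX.heart M ∧ wZ.leW (-1) (il.obj M) ∧ wZ.geW 1 (ir.obj M))
    (hiso : Nonempty (js.obj M ≅ MU)) :
    (wX.leW (α - 2) ((im.obj (il.obj M))⟦(-1 : ℤ)⟧) ∧
      ∃ (d : (im.obj (il.obj M))⟦(-1 : ℤ)⟧ ⟶ jl.obj MU) (f : jl.obj MU ⟶ M)
        (g : M ⟶ ((im.obj (il.obj M))⟦(-1 : ℤ)⟧)⟦(1 : ℤ)⟧),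
        Triangle.mk d f g ∈ distTriang CX) ∧
    (wX.geW (β + 1) ((im.obj (ir.obj M))⟦(1 : ℤ)⟧) ∧
      ∃ (f : M ⟶ jr.obj MU) (g : jr.obj MU ⟶ (im.obj (ir.obj M))⟦(1 : ℤ)⟧)
        (h : (im.obj (ir.obj M))⟦(1 : ℤ)⟧ ⟶ M⟦(1 : ℤ)⟧),
        Triangle.mk f g h ∈ distTriang CX) ∧
    wX.WithoutWeights (α - 1) (-1) (jl.obj MU) ∧
    wX.WithoutWeights 1 β (jr.obj MU) ∧
    wD.WithoutWeights (α - 1) (-1) (a.obj (jl.obj MU)) ∧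
    wD.WithoutWeights 1 β (a.obj (jr.obj MU)) := by
  
  obtain ⟨⟨hMle, hMge⟩, hMil, hMir⟩ := hM
  obtain ⟨e⟩ := hiso
  have hil1 : wZ.le ((il.obj M)⟦(1 : ℤ)⟧) := by
    have h := hMil
    unfold WeightStructure.leW at h
    rwa [neg_neg] at h
  have hir1 : wZ.ge ((ir.obj M)⟦(-1 : ℤ)⟧) := hMir
  -- the triangle i^! M → i^* M → i^* j_* j^* M in CZ
  obtain ⟨δ₂, hT2⟩ := hglue.tri₂ M
  obtain ⟨δ₁, hT1⟩ := hglue.tri₁ M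
  have hT2' : il.mapTriangle.obj (Triangle.mk (adj₄.counit.app M) (adj₂.unit.app M) δ₂)
      ∈ distTriang CZ := il.map_distinguished _ hT2
  set c : il.obj (im.obj (ir.obj M)) ≅ ir.obj M := asIso (adj₃.counit.app (ir.obj M)) with hc
  set fz : ir.obj M ⟶ il.obj M := c.inv ≫ il.map (adj₄.counit.app M) with hfz
  set gz : il.obj M ⟶ il.obj (jr.obj (js.obj M)) := il.map (adj₂.unit.app M) with hgz
  set dz : il.obj (jr.obj (js.obj M)) ⟶ (ir.obj M)⟦(1 : ℤ)⟧ :=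
    (il.map δ₂ ≫ (il.commShiftIso (1 : ℤ)).hom.app (im.obj (ir.obj M))) ≫
      (shiftFunctor CZ (1 : ℤ)).map c.hom with hdz
  have hTz : Triangle.mk fz gz dz ∈ distTriang CZ := by
    refine isomorphic_distinguished _ hT2' _ ?_
    refine Triangle.isoMk _ _ c.symm (Iso.refl _) (Iso.refl _) ?_ ?_ ?_
    · dsimp only [Triangle.mk, Functor.mapTriangle]; simp [hfz]
    · dsimp only [Triangle.mk, Functor.mapTriangle]; simp [hgz]
    · dsimp only [Triangle.mk, Functor.mapTriangle]; dsimp [hdz]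
      rw [Category.assoc, ← Functor.map_comp, c.hom_inv_id]
      simp
  -- the weight triangle on i^* j_* j^* M
  obtain ⟨A, B, fA, gB, hBA, hdist, hA, hB⟩ := hav
  set e2 : il.obj (jr.obj (js.obj M)) ≅ il.obj (jr.obj MU) := il.mapIso (jr.mapIso e) with he2
  set aw : A ⟶ il.obj (jr.obj (js.obj M)) := fA ≫ e2.inv with haw
  set bw : il.obj (jr.obj (js.obj M)) ⟶ B := e2.hom ≫ gB with hbw
  have hTw : Triangle.mk aw bw hBA ∈ distTriang CZ := by
    refine isomorphic_distinguished _ hdist _ ?_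
    exact Triangle.isoMk _ _ (Iso.refl _) e2 (Iso.refl _) (by dsimp only [Triangle.mk]; simp [haw]) (by dsimp only [Triangle.mk]; simp [hbw])
      (by dsimp only [Triangle.mk]; simp)
  have hA' : wZ.le (A⟦(-(α - 1))⟧) := hA
  have hB' : wZ.ge (B⟦(-(β + 1))⟧) := hB
  -- Hom-vanishing statements
  have v1 : ∀ u : il.obj M ⟶ B, u = 0 := fun u =>
    wZ.hom_zero (p := 1) (q := -(β + 1)) (by omega) hil1 hB' u
  have v2 : ∀ u : A ⟶ (ir.obj M)⟦(1 : ℤ)⟧, u = 0 := fun u => by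
    refine wZ.hom_zero (p := -(α - 1)) (q := -2) (by omega) hA' ?_ u
    exact wZ.ge_iso ((shiftFunctorAdd' CZ 1 (-2) (-1) (by ring)).app (ir.obj M)) hir1
  have v3 : ∀ u : il.obj M ⟶ ir.obj M, u = 0 := fun u =>
    wZ.hom_zero (p := 1) (q := -1) (by omega) hil1 hir1 u
  have v4 : ∀ u : (il.obj M)⟦(1 : ℤ)⟧ ⟶ (ir.obj M)⟦(1 : ℤ)⟧, u = 0 := fun u => by
    refine wZ.hom_zero (p := 0) (q := -2) (by omega) ?_ ?_ u
    · exact wZ.le_iso ((shiftFunctorZero CZ ℤ).app ((il.obj M)⟦(1 : ℤ)⟧)).symm hil1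
    · exact wZ.ge_iso ((shiftFunctorAdd' CZ 1 (-2) (-1) (by ring)).app (ir.obj M)) hir1
  -- part (a): i^* M is a retract of A
  obtain ⟨φ, hφ⟩ := Triangle.coyoneda_exact₂ _ hTw gz (v1 _)
  dsimp only [Triangle.mk] at φ hφ
  have hφ' : gz = φ ≫ aw := hφ
  obtain ⟨ψ, hψ⟩ := Triangle.coyoneda_exact₃ _ hTz aw (v2 _)
  dsimp only [Triangle.mk] at ψ hψ
  have hψ' : aw = ψ ≫ gz := hψ
  have hret : φ ≫ ψ = 𝟙 (il.obj M) := by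
    obtain ⟨u, hu⟩ := Triangle.coyoneda_exact₂ _ hTz (𝟙 (il.obj M) - φ ≫ ψ) (by
      show (𝟙 (il.obj M) - φ ≫ ψ) ≫ gz = 0
      rw [Preadditive.sub_comp, Category.id_comp, Category.assoc, ← hψ', ← hφ', sub_self])
    dsimp only [Triangle.mk] at u hu
    rw [v3 u, Limits.zero_comp, sub_eq_zero] at hu
    exact hu.symm
  have hilM : wZ.le ((il.obj M)⟦(-(α - 1))⟧) :=
    wZ.le_retract ((shiftFunctor CZ (-(α - 1))).map φ) ((shiftFunctor CZ (-(α - 1))).map ψ)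
      (by rw [← Functor.map_comp, hret, CategoryTheory.Functor.map_id]) hA'
  -- part (b): i^! M [1] is a retract of B
  obtain ⟨ρ, hρ⟩ := Triangle.yoneda_exact₃ _ hTz bw (v1 _)
  dsimp only [Triangle.mk] at ρ hρ
  have hρ' : bw = dz ≫ ρ := hρ
  obtain ⟨σ, hσ⟩ := Triangle.yoneda_exact₂ _ hTw dz (v2 _)
  dsimp only [Triangle.mk] at σ hσ
  have hσ' : dz = bw ≫ σ := hσ
  have hretB : ρ ≫ σ = 𝟙 ((ir.obj M)⟦(1 : ℤ)⟧) := by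
    obtain ⟨v, hv⟩ := Triangle.yoneda_exact₃ _ (rot_of_distTriang _ hTz)
      (𝟙 ((ir.obj M)⟦(1 : ℤ)⟧) - ρ ≫ σ) (by
        show dz ≫ (𝟙 ((ir.obj M)⟦(1 : ℤ)⟧) - ρ ≫ σ) = 0
        rw [Preadditive.comp_sub, Category.comp_id, ← Category.assoc, ← hρ', ← hσ', sub_self])
    dsimp only [Triangle.mk, Triangle.rotate] at v hv
    rw [v4 v, Limits.comp_zero, sub_eq_zero] at hv
    exact hv.symm
  have hirM : wZ.ge (((ir.obj M)⟦(1 : ℤ)⟧)⟦(-(β + 1))⟧) :=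
    wZ.ge_retract ((shiftFunctor CZ (-(β + 1))).map ρ) ((shiftFunctor CZ (-(β + 1))).map σ)
      (by rw [← Functor.map_comp, hretB, CategoryTheory.Functor.map_id]) hB'
  -- transport to CX
  have goal1 : wX.leW (α - 2) ((im.obj (il.obj M))⟦(-1 : ℤ)⟧) := by
    show wX.le ((((im.obj (il.obj M))⟦(-1 : ℤ)⟧))⟦(-(α - 2))⟧)
    have h1 : wX.le (im.obj ((il.obj M)⟦(-(α - 1))⟧)) := hw.im_le _ hilM
    have h2 : wX.le ((im.obj (il.obj M))⟦(-(α - 1))⟧) :=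
      wX.le_iso ((im.commShiftIso (-(α - 1))).app (il.obj M)) h1
    exact wX.le_iso ((shiftFunctorAdd' CX (-1) (-(α - 2)) (-(α - 1)) (by ring)).app
      (im.obj (il.obj M))) h2
  have goal3 : wX.geW (β + 1) ((im.obj (ir.obj M))⟦(1 : ℤ)⟧) := by
    show wX.ge ((((im.obj (ir.obj M))⟦(1 : ℤ)⟧))⟦(-(β + 1))⟧)
    have h1 : wZ.ge ((ir.obj M)⟦(-β)⟧) :=
      wZ.ge_iso ((shiftFunctorAdd' CZ 1 (-(β + 1)) (-β) (by ring)).app (ir.obj M)).symm hirM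
    have h2 : wX.ge ((im.obj (ir.obj M))⟦(-β)⟧) :=
      wX.ge_iso ((im.commShiftIso (-β)).app (ir.obj M)) (hw.im_ge _ h1)
    exact wX.ge_iso ((shiftFunctorAdd' CX 1 (-(β + 1)) (-β) (by ring)).app
      (im.obj (ir.obj M))) h2
  -- the two distinguished triangles in CX
  have hT1' := hT1
  set T1 : Triangle CX := Triangle.mk (adj₁.counit.app M) (adj₃.unit.app M) δ₁ with hT1def
  set e3 : jl.obj (js.obj M) ≅ jl.obj MU := jl.mapIso e with he3
  have hTg1 : Triangle.mk (T1.invRotate.mor₁ ≫ e3.hom) (e3.inv ≫ T1.invRotate.mor₂)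
      T1.invRotate.mor₃ ∈ distTriang CX := by
    refine isomorphic_distinguished _ (inv_rot_of_distTriang _ hT1) _ ?_
    exact Triangle.isoMk _ _ (Iso.refl _) e3.symm (Iso.refl _) (by dsimp only [T1, Triangle.invRotate, Triangle.mk]; simp)
      (by dsimp only [T1, Triangle.invRotate, Triangle.mk]; simp) (by dsimp only [T1, Triangle.invRotate, Triangle.mk]; simp)
  set T2 : Triangle CX := Triangle.mk (adj₄.counit.app M) (adj₂.unit.app M) δ₂ with hT2def
  set e4 : jr.obj (js.obj M) ≅ jr.obj MU := jr.mapIso e with he4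
  have hTg2 : Triangle.mk (T2.rotate.mor₁ ≫ e4.hom) (e4.inv ≫ T2.rotate.mor₂)
      T2.rotate.mor₃ ∈ distTriang CX := by
    refine isomorphic_distinguished _ (rot_of_distTriang _ hT2) _ ?_
    exact Triangle.isoMk _ _ (Iso.refl _) e4.symm (Iso.refl _) (by dsimp only [T2, Triangle.rotate, Triangle.mk]; simp)
      (by dsimp only [T2, Triangle.rotate, Triangle.mk]; simp) (by dsimp only [T2, Triangle.rotate, Triangle.mk]; simp)
  have hge0M : wX.geW 0 M := by
    show wX.ge (M⟦(-0 : ℤ)⟧)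
    rw [neg_zero]
    exact wX.ge_iso ((shiftFunctorZero CX ℤ).app M).symm hMge
  have hle0M : wX.leW 0 M := by
    show wX.le (M⟦(-0 : ℤ)⟧)
    rw [neg_zero]
    exact wX.le_iso ((shiftFunctorZero CX ℤ).app M).symm hMle
  have goal5 : wX.WithoutWeights (α - 1) (-1) (jl.obj MU) := by
    refine ⟨_, _, _, _, _, hTg1, ?_, ?_⟩
    · rw [show α - 1 - 1 = α - 2 by ring]
      exact goal1
    · rw [show (-1 : ℤ) + 1 = 0 by ring]
      exact hge0M
  have goal6 : wX.WithoutWeights 1 β (jr.obj MU) := by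
    refine ⟨_, _, _, _, _, hTg2, ?_, ?_⟩
    · rw [show (1 : ℤ) - 1 = 0 by ring]
      exact hle0M
    · exact goal3
  have goal7 : wD.WithoutWeights (α - 1) (-1) (a.obj (jl.obj MU)) := by
    refine ⟨_, _, _, _, _, a.map_distinguished _ hTg1, ?_, ?_⟩
    · rw [show α - 1 - 1 = α - 2 by ring]
      show wD.le ((a.obj ((im.obj (il.obj M))⟦(-1 : ℤ)⟧))⟦(-(α - 2))⟧)
      exact wD.le_iso ((a.commShiftIso (-(α - 2))).app ((im.obj (il.obj M))⟦(-1 : ℤ)⟧))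
        (ha.1 _ goal1)
    · rw [show (-1 : ℤ) + 1 = 0 by ring]
      show wD.ge ((a.obj M)⟦(-0 : ℤ)⟧)
      rw [neg_zero]
      exact wD.ge_iso ((shiftFunctorZero D ℤ).app (a.obj M)).symm (ha.2 _ hMge)
  have goal8 : wD.WithoutWeights 1 β (a.obj (jr.obj MU)) := by
    refine ⟨_, _, _, _, _, a.map_distinguished _ hTg2, ?_, ?_⟩
    · rw [show (1 : ℤ) - 1 = 0 by ring]
      show wD.le ((a.obj M)⟦(-0 : ℤ)⟧)
      rw [neg_zero]
      exact wD.le_iso ((shiftFunctorZero D ℤ).app (a.obj M)).symm (ha.1 _ hMle)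
    · show wD.ge ((a.obj ((im.obj (ir.obj M))⟦(1 : ℤ)⟧))⟦(-(β + 1))⟧)
      exact wD.ge_iso ((a.commShiftIso (-(β + 1))).app ((im.obj (ir.obj M))⟦(1 : ℤ)⟧))
        (ha.2 _ goal3)
  exact ⟨⟨goal1, _, _, _, hTg1⟩, ⟨goal3, _, _, _, hTg2⟩, goal5, goal6, goal7, goal8⟩
end

section
/- Let C(U), C(X), C(Z) be pretriangulated categories related by gluing and equipped with weight structures compatible with the gluing, and let a : C(X) → D be a weight-exact exact functor to a pretriangulated category with weight structure. Let M_U ∈ C(U)_{w=0,∂w≠0,1}, and let M ∈ C(X)_{w=0,i^*w≤−1,i^!w≥1} satisfy j^* M ≅ M_U (i.e. M = j_{!*} M_U). Then a(j_! M_U) belongs to D_{w≤0,≠−1}, a(j_* M_U) belongs to D_{w≥0,≠1}, and there are canonical isomorphisms Gr_0(a(j_! M_U)) ≅ a(M) and a(M) ≅ Gr_0(a(j_* M_U)) whose composition equals Gr_0(a(m)), where m : j_! M_U → j_* M_U is the canonical morphism; in particular Gr_0(a(m)) is an isomorphism, and every endomorphism of a(j_! M_U) or of a(j_* M_U) induces,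 via Gr_0 and these isomorphisms, an endomorphism of a(M). (Theorem 2G (c) and Theorem 2H, abstract form.) -/
set_option linter.unusedVariables false

open CategoryTheory Limits Pretriangulated

universe w₁ w₂ w₃ w₄ v₁ v₂ v₃ v₄ u₁ u₂ u₃ u₄

variable {CU : Type*} [Category CU] [HasZeroObject CU] [Preadditive CU]
  [HasShift CU ℤ] [∀ n : ℤ, (shiftFunctor CU n).Additive] [Pretriangulated CU]
variable {CX : Type*} [Category CX] [HasZeroObject CX] [Preadditive CX]
  [HasShift CX ℤ] [∀ n : ℤ, (shiftFunctor CX n).Additive] [Pretriangulated CX]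
variable {CZ : Type*} [Category CZ] [HasZeroObject CZ] [Preadditive CZ]
  [HasShift CZ ℤ] [∀ n : ℤ, (shiftFunctor CZ n).Additive] [Pretriangulated CZ]

/- The six gluing functors: `jl = j_!`, `js = j^*`, `jr = j_*`,
   `il = i^*`, `im = i_*`, `ir = i^!`; all of them are exact. -/
variable (jl : CU ⥤ CX) (js : CX ⥤ CU) (jr : CU ⥤ CX)
  (il : CX ⥤ CZ) (im : CZ ⥤ CX) (ir : CX ⥤ CZ)
  [jl.CommShift ℤ] [jl.IsTriangulated] [js.CommShift ℤ] [js.IsTriangulated]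
  [jr.CommShift ℤ] [jr.IsTriangulated] [il.CommShift ℤ] [il.IsTriangulated]
  [im.CommShift ℤ] [im.IsTriangulated] [ir.CommShift ℤ] [ir.IsTriangulated]
  [im.Full] [im.Faithful]
variable (adj₁ : jl ⊣ js) (adj₂ : js ⊣ jr) (adj₃ : il ⊣ im) (adj₄ : im ⊣ ir)

variable (wU : WeightStructure CU) (wX : WeightStructure CX) (wZ : WeightStructure CZ)

namespace WeightStructure

variable {E : Type*} [Category E] [HasZeroObject E] [Preadditive E]
    [HasShift E ℤ] [∀ n : ℤ, (shiftFunctor E n).Additive] [Pretriangulated E]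

lemma le_shift_of (w : WeightStructure E) (X : E) (m n k : ℤ) (h : m + n = k)
    (hX : w.le (X⟦k⟧)) : w.le ((X⟦m⟧)⟦n⟧) :=
  w.le_iso ((shiftFunctorAdd' E m n k h).app X) hX

lemma le_shift_to (w : WeightStructure E) (X : E) (m n k : ℤ) (h : m + n = k)
    (hX : w.le ((X⟦m⟧)⟦n⟧)) : w.le (X⟦k⟧) :=
  w.le_iso ((shiftFunctorAdd' E m n k h).app X).symm hX

lemma ge_shift_of (w : WeightStructure E) (X : E) (m n k : ℤ) (h : m + n = k)
    (hX : w.ge (X⟦k⟧)) : w.ge ((X⟦m⟧)⟦n⟧) :=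
  w.ge_iso ((shiftFunctorAdd' E m n k h).app X) hX

lemma ge_shift_to (w : WeightStructure E) (X : E) (m n k : ℤ) (h : m + n = k)
    (hX : w.ge ((X⟦m⟧)⟦n⟧)) : w.ge (X⟦k⟧) :=
  w.ge_iso ((shiftFunctorAdd' E m n k h).app X).symm hX

lemma le_congr (w : WeightStructure E) (X : E) {m n : ℤ} (h : m = n)
    (hX : w.le (X⟦m⟧)) : w.le (X⟦n⟧) := by subst h; exact hX

lemma ge_congr (w : WeightStructure E) (X : E) {m n : ℤ} (h : m = n)
    (hX : w.ge (X⟦m⟧)) : w.ge (X⟦n⟧) := by subst h; exact hX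

lemma le_zshift (w : WeightStructure E) (X : E) (hX : w.le X) : w.le (X⟦(0 : ℤ)⟧) :=
  w.le_iso ((shiftFunctorZero E ℤ).app X).symm hX

lemma ge_zshift (w : WeightStructure E) (X : E) (hX : w.ge X) : w.ge (X⟦(0 : ℤ)⟧) :=
  w.ge_iso ((shiftFunctorZero E ℤ).app X).symm hX

lemma hom_zero_s13 (w : WeightStructure E) {A B : E} (φ : A ⟶ B) (p q : ℤ) (hpq : q + 1 = p)
    (hA : w.le (A⟦p⟧)) (hB : w.ge (B⟦q⟧)) : φ = 0 := by
  have h1 : (shiftFunctor E p).map φ ≫ ((shiftFunctorAdd' E q 1 p hpq).app B).hom = 0 :=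
    w.orth _ hA hB
  have h2 : (shiftFunctor E p).map φ = 0 := by
    rw [← cancel_mono ((shiftFunctorAdd' E q 1 p hpq).app B).hom, h1, zero_comp]
  apply (shiftFunctor E p).map_injective
  rw [h2, Functor.map_zero]

end WeightStructure

/-- **Theorem 2G (c) and Theorem 2H, abstract form.** Let `M_U ∈ C(U)_{w=0, ∂w ≠ 0,1}`,
let `M = j_{!*} M_U` (i.e. `M ∈ C(X)_{w=0, i^*w ≤ -1, i^!w ≥ 1}` with an isomorphism
`e : j^* M ≅ M_U`), and let `a : C(X) → D` be weight-exact and exact. Write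
`f : j_! M_U → M` and `g : M → j_* M_U` for the canonical morphisms (adjoint to `e.inv`
and `e.hom`); their composite is the canonical morphism `m : j_! M_U → j_* M_U`. Then
`a(j_! M_U) ∈ D_{w≤0, ≠-1}`, `a(j_* M_U) ∈ D_{w≥0, ≠1}`, `a(M)` lies in the heart of
`D`, `a(f)` exhibits `a(M)` as `Gr₀(a(j_! M_U))` and `a(g)` exhibits `a(M)` as
`Gr₀(a(j_* M_U))` (universal properties), and every endomorphism of `a(j_! M_U)` or of
`a(j_* M_U)` induces a unique compatible endomorphism of `a(M)`. -/
theorem gr_zero_of_direct_images_and_functoriality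
    (hglue : IsGluing jl js jr il im ir adj₁ adj₂ adj₃ adj₄)
    (hw : GluedWeights jl js jr il im ir wU wX wZ)
    {D : Type*} [Category D] [HasZeroObject D] [Preadditive D]
    [HasShift D ℤ] [∀ n : ℤ, (shiftFunctor D n).Additive] [Pretriangulated D]
    (wD : WeightStructure D)
    (a : CX ⥤ D) [a.CommShift ℤ] [a.IsTriangulated] (ha : WeightExact wX wD a)
    (MU : CU) (hMU : wU.heart MU ∧ wZ.WithoutWeights 0 1 (il.obj (jr.obj MU)))
    (M : CX) (hM : wX.heart M ∧ wZ.leW (-1) (il.obj M) ∧ wZ.geW 1 (ir.obj M))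
    (e : js.obj M ≅ MU) :
    -- the composite of the canonical maps `f` and `g` is the canonical morphism `m`
    (adj₁.homEquiv MU (jr.obj MU)
        (((adj₁.homEquiv MU M).symm e.inv) ≫ ((adj₂.homEquiv M MU) e.hom)) ≫
      adj₂.counit.app MU = 𝟙 MU) ∧
    -- `a(j_! M_U) ∈ D_{w≤0, ≠-1}`
    (wD.le (a.obj (jl.obj MU)) ∧ wD.WithoutWeights (-1) (-1) (a.obj (jl.obj MU))) ∧
    -- `a(j_* M_U) ∈ D_{w≥0, ≠1}`
    (wD.ge (a.obj (jr.obj MU)) ∧ wD.WithoutWeights 1 1 (a.obj (jr.obj MU))) ∧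
    -- `a(M)` is a Chow object, pure of weight zero
    wD.heart (a.obj M) ∧
    -- `a(f)` exhibits `a(M)` as `Gr₀(a(j_! M_U))`
    (∀ (N : D), wD.heart N → ∀ φ : a.obj (jl.obj MU) ⟶ N,
      ∃! ψ : a.obj M ⟶ N, a.map ((adj₁.homEquiv MU M).symm e.inv) ≫ ψ = φ) ∧
    -- `a(g)` exhibits `a(M)` as `Gr₀(a(j_* M_U))`
    (∀ (N : D), wD.heart N → ∀ φ : N ⟶ a.obj (jr.obj MU),
      ∃! ψ : N ⟶ a.obj M, ψ ≫ a.map ((adj₂.homEquiv M MU) e.hom) = φ) ∧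
    -- any endomorphism of `a(j_! M_U)` induces an endomorphism of `a(M)`
    (∀ φ : a.obj (jl.obj MU) ⟶ a.obj (jl.obj MU),
      ∃! ψ : a.obj M ⟶ a.obj M,
        a.map ((adj₁.homEquiv MU M).symm e.inv) ≫ ψ =
          φ ≫ a.map ((adj₁.homEquiv MU M).symm e.inv)) ∧
    -- any endomorphism of `a(j_* M_U)` induces an endomorphism of `a(M)`
    (∀ φ : a.obj (jr.obj MU) ⟶ a.obj (jr.obj MU),
      ∃! ψ : a.obj M ⟶ a.obj M,
        ψ ≫ a.map ((adj₂.homEquiv M MU) e.hom) =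
          a.map ((adj₂.homEquiv M MU) e.hom) ≫ φ) := by
  obtain ⟨hMUh, -⟩ := hMU
  obtain ⟨hMh, hMle, hMge⟩ := hM
  set f : jl.obj MU ⟶ M := (adj₁.homEquiv MU M).symm e.inv with hfdef
  set g : M ⟶ jr.obj MU := (adj₂.homEquiv M MU) e.hom with hgdef
  obtain ⟨δ₁, hδ₁⟩ := hglue.tri₁ M
  obtain ⟨δ₂, hδ₂⟩ := hglue.tri₂ M
  -- the triangle  j_! M_U → M → i_* i^* M
  have hT₁ : Triangle.mk f (adj₃.unit.app M)
      (δ₁ ≫ (shiftFunctor CX (1 : ℤ)).map (jl.map e.hom)) ∈ distTriang CX := by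
    refine isomorphic_distinguished _ hδ₁ _ ?_
    refine Triangle.isoMk _ _ ((jl.mapIso e).symm) (Iso.refl M) (Iso.refl (im.obj (il.obj M))) ?_ ?_ ?_
    · dsimp only [Triangle.mk]; simp [hfdef, Adjunction.homEquiv_counit]
    · dsimp only [Triangle.mk]; simp
    · dsimp only [Triangle.mk]; dsimp
      simp [← Functor.map_comp]
  -- the triangle  i_* i^! M → M → j_* M_U
  have hT₂ : Triangle.mk (adj₄.counit.app M) g (jr.map e.inv ≫ δ₂) ∈ distTriang CX := by
    refine isomorphic_distinguished _ hδ₂ _ ?_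
    refine Triangle.isoMk _ _ (Iso.refl (im.obj (ir.obj M))) (Iso.refl M) ((jr.mapIso e).symm) ?_ ?_ ?_
    · dsimp only [Triangle.mk]; simp
    · dsimp only [Triangle.mk]; simp [hgdef, Adjunction.homEquiv_unit, ← Functor.map_comp]
    · dsimp only [Triangle.mk]; simp
  -- weight bounds on the third/first terms
  have hMle' : wZ.le ((il.obj M)⟦(-(-1) : ℤ)⟧) := hMle
  have hCn : wX.le ((im.obj (il.obj M))⟦(1 : ℤ)⟧) :=
    wX.le_iso ((im.commShiftIso (1 : ℤ)).app (il.obj M))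
      (hw.im_le _ (wZ.le_congr _ (show (-(-1) : ℤ) = 1 by norm_num) hMle'))
  have hMge' : wZ.ge ((ir.obj M)⟦(-1 : ℤ)⟧) := hMge
  have hCp : wX.ge ((im.obj (ir.obj M))⟦(-1 : ℤ)⟧) :=
    wX.ge_iso ((im.commShiftIso (-1 : ℤ)).app (ir.obj M)) (hw.im_ge _ hMge')
  have hZle : wD.le ((a.obj (im.obj (il.obj M)))⟦(1 : ℤ)⟧) :=
    wD.le_iso ((a.commShiftIso (1 : ℤ)).app _) (ha.1 _ hCn)
  have hZ'ge : wD.ge ((a.obj (im.obj (ir.obj M)))⟦(-1 : ℤ)⟧) :=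
    wD.ge_iso ((a.commShiftIso (-1 : ℤ)).app _) (ha.2 _ hCp)
  -- image triangles in D
  have hTD₁ := a.map_distinguished _ hT₁
  have hTD₂ := a.map_distinguished _ hT₂
  -- vanishing of morphisms
  have hNZ : ∀ (N : D), wD.ge N → ∀ (χ : a.obj (im.obj (il.obj M)) ⟶ N), χ = 0 :=
    fun N hN χ => wD.hom_zero_s13 χ 1 0 (by norm_num) hZle (wD.ge_zshift N hN)
  have hNZ' : ∀ (N : D), wD.ge N →
      ∀ (χ : (a.obj (im.obj (il.obj M)))⟦(-1 : ℤ)⟧ ⟶ N), χ = 0 :=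
    fun N hN χ => wD.hom_zero_s13 χ 2 1 (by norm_num)
      (wD.le_shift_of _ (-1) 2 1 (by norm_num) hZle) (wD.ge_shift N hN)
  have hNZg : ∀ (N : D), wD.le N → ∀ (χ : N ⟶ a.obj (im.obj (ir.obj M))), χ = 0 :=
    fun N hN χ => wD.hom_zero_s13 χ 0 (-1) (by norm_num) (wD.le_zshift N hN) hZ'ge
  have hNZg' : ∀ (N : D), wD.le N →
      ∀ (χ : N ⟶ (a.obj (im.obj (ir.obj M)))⟦(1 : ℤ)⟧), χ = 0 :=
    fun N hN χ => wD.hom_zero_s13 χ 0 (-1) (by norm_num) (wD.le_zshift N hN)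
      (wD.ge_shift_of _ 1 (-1) 0 (by norm_num)
        (wD.ge_shift_to _ (-1) 1 0 (by norm_num) (wD.ge_shift _ hZ'ge)))
  -- universal property of a(f)
  have UPf : ∀ (N : D), wD.heart N → ∀ φ : a.obj (jl.obj MU) ⟶ N,
      ∃! ψ : a.obj M ⟶ N, a.map f ≫ ψ = φ := by
    intro N hN φ
    obtain ⟨ψ₀, hψ₀⟩ := Triangle.yoneda_exact₂ _ (inv_rot_of_distTriang _ hTD₁) φ
      (hNZ' N hN.2 _)
    have hex : ∃ ψ : a.obj M ⟶ N, a.map f ≫ ψ = φ := ⟨ψ₀, hψ₀.symm⟩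
    obtain ⟨ψ, hψ'⟩ := hex
    refine ⟨ψ, hψ', fun ψ₂ hψ₂ => ?_⟩
    have hd : a.map f ≫ (ψ₂ - ψ) = 0 := by
      rw [Preadditive.comp_sub, hψ₂, hψ', sub_self]
    obtain ⟨χ, hχ⟩ := Triangle.yoneda_exact₂ _ hTD₁ (ψ₂ - ψ) hd
    rw [hNZ N hN.2 χ] at hχ
    exact sub_eq_zero.mp (hχ.trans comp_zero)
  -- universal property of a(g)
  have UPg : ∀ (N : D), wD.heart N → ∀ φ : N ⟶ a.obj (jr.obj MU),
      ∃! ψ : N ⟶ a.obj M, ψ ≫ a.map g = φ := by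
    intro N hN φ
    obtain ⟨ψ₀, hψ₀⟩ := Triangle.coyoneda_exact₂ _ (rot_of_distTriang _ hTD₂) φ
      (hNZg' N hN.1 _)
    have hex : ∃ ψ : N ⟶ a.obj M, ψ ≫ a.map g = φ := ⟨ψ₀, hψ₀.symm⟩
    obtain ⟨ψ, hψ'⟩ := hex
    refine ⟨ψ, hψ', fun ψ₂ hψ₂ => ?_⟩
    have hd : (ψ₂ - ψ) ≫ a.map g = 0 := by
      rw [Preadditive.sub_comp, hψ₂, hψ', sub_self]
    obtain ⟨χ, hχ⟩ := Triangle.coyoneda_exact₂ _ hTD₂ (ψ₂ - ψ) hd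
    rw [hNZg N hN.1 χ] at hχ
    exact sub_eq_zero.mp (hχ.trans zero_comp)
  -- a(j_! M_U) is without weight -1
  have hW1 : wD.WithoutWeights (-1) (-1) (a.obj (jl.obj MU)) := by
    refine ⟨_, _, _, _, _, inv_rot_of_distTriang _ hTD₁, ?_, ?_⟩
    · exact wD.le_shift_of _ (-1) (-(-1 - 1)) 1 (by norm_num) hZle
    · exact wD.ge_congr _ (show (0 : ℤ) = -(-1 + 1) by norm_num)
        (wD.ge_zshift _ (ha.2 M hMh.2))
  -- a(j_* M_U) is without weight 1
  have hW2 : wD.WithoutWeights 1 1 (a.obj (jr.obj MU)) := by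
    refine ⟨_, _, _, _, _, rot_of_distTriang _ hTD₂, ?_, ?_⟩
    · exact wD.le_congr _ (show (0 : ℤ) = -(1 - 1) by norm_num)
        (wD.le_zshift _ (ha.1 M hMh.1))
    · exact wD.ge_shift_of _ 1 (-(1 + 1)) (-1) (by norm_num) hZ'ge
  -- the composite of f and g is the canonical morphism
  have hm : adj₁.homEquiv MU (jr.obj MU) (f ≫ g) ≫ adj₂.counit.app MU = 𝟙 MU := by
    simp [hfdef, hgdef, Adjunction.homEquiv_unit, Adjunction.homEquiv_counit]
  exact ⟨hm, ⟨ha.1 _ (hw.jl_le MU hMUh.1), hW1⟩, ⟨ha.2 _ (hw.jr_ge MU hMUh.2), hW2⟩,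
    ⟨ha.1 M hMh.1, ha.2 M hMh.2⟩, UPf, UPg,
    fun φ => UPf _ ⟨ha.1 M hMh.1, ha.2 M hMh.2⟩ (φ ≫ a.map f),
    fun φ => UPg _ ⟨ha.1 M hMh.1, ha.2 M hMh.2⟩ (a.map g ≫ φ)⟩
end

section
/- Let C be a pretriangulated category with weight structure, let A ∈ C_{w≤0}, B ∈ C_{w≥0}, and u : A → B a morphism, and suppose there is a distinguished triangle A → B → E → A[1], with first map u, in which E is without weights 0 and 1. Then A is without weight −1, B is without weight 1, the induced morphism Gr_0(u) : Gr_0 A → Gr_0 B is an isomorphism, and for any factorization A → M → B of u with M ∈ C_{w=0}, the object Gr_0 A is canonically identified with a direct factor of M admitting a canonical complement (i.e. M decomposes as Gr_0 A ⊕ M′, compatibly with the factorization). (Theorem 2I, abstract form; cf. [W4, Cor. 2.5].) -/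
set_option linter.unusedVariables false

open CategoryTheory Limits Pretriangulated

universe w₁ w₂ w₃ w₄ v₁ v₂ v₃ v₄ u₁ u₂ u₃ u₄

namespace WeightStructure

variable {C : Type*} [Category C] [HasZeroObject C] [Preadditive C]
    [HasShift C ℤ] [∀ n : ℤ, (shiftFunctor C n).Additive] [Pretriangulated C]
    (w : WeightStructure C)

/-- Convenient iso `X⟦c⟧ ≅ X⟦a⟧⟦b⟧` when `a + b = c`. -/
noncomputable def sAdd (a b c : ℤ) (hc : a + b = c) (X : C) :
    X⟦c⟧ ≅ (X⟦a⟧)⟦b⟧ :=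
  (shiftFunctorAdd' C a b c hc).app X

lemma leW_congr {a b : ℤ} (hab : a = b) {X : C} (hX : w.leW a X) : w.leW b X := by
  subst hab; exact hX

lemma geW_congr {a b : ℤ} (hab : a = b) {X : C} (hX : w.geW a X) : w.geW b X := by
  subst hab; exact hX

lemma le_shift_of_nonpos {X : C} (hX : w.le X) (n : ℤ) (hn : n ≤ 0) : w.le (X⟦n⟧) := by
  have key : ∀ k : ℕ, w.le (X⟦-(k : ℤ)⟧) := by
    intro k
    induction k with
    | zero =>
      refine w.le_iso ?_ hX
      have : (-((0 : ℕ) : ℤ)) = (0 : ℤ) := by norm_num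
      rw [this]
      exact ((shiftFunctorZero C ℤ).app X).symm
    | succ k ih =>
      refine w.le_iso (sAdd (-(k : ℤ)) (-1) (-((k+1 : ℕ) : ℤ)) (by push_cast; ring) X).symm
        (w.le_shift _ ih)
  obtain ⟨k, rfl⟩ : ∃ k : ℕ, n = -(k : ℤ) := ⟨n.natAbs, by omega⟩
  exact key k

lemma ge_shift_of_nonneg {X : C} (hX : w.ge X) (n : ℤ) (hn : 0 ≤ n) : w.ge (X⟦n⟧) := by
  have key : ∀ k : ℕ, w.ge (X⟦(k : ℤ)⟧) := by
    intro k
    induction k with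
    | zero =>
      refine w.ge_iso ?_ hX
      exact ((shiftFunctorZero C ℤ).app X).symm
    | succ k ih =>
      refine w.ge_iso (sAdd (k : ℤ) 1 ((k+1 : ℕ) : ℤ) (by push_cast; ring) X).symm
        (w.ge_shift _ ih)
  obtain ⟨k, rfl⟩ : ∃ k : ℕ, n = (k : ℤ) := ⟨n.natAbs, by omega⟩
  exact key k

lemma leW_shift {a : ℤ} {X : C} (hX : w.leW a X) (n : ℤ) : w.leW (a + n) (X⟦n⟧) :=
  w.le_iso (sAdd n (-(a+n)) (-a) (by ring) X) hX

lemma geW_shift {b : ℤ} {X : C} (hX : w.geW b X) (n : ℤ) : w.geW (b + n) (X⟦n⟧) :=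
  w.ge_iso (sAdd n (-(b+n)) (-b) (by ring) X) hX

lemma leW_mono {a b : ℤ} (hab : a ≤ b) {X : C} (hX : w.leW a X) : w.leW b X :=
  w.le_iso (sAdd (-a) (a - b) (-b) (by ring) X).symm
    (w.le_shift_of_nonpos hX (a - b) (by omega))

lemma geW_mono {a b : ℤ} (hab : a ≤ b) {X : C} (hX : w.geW b X) : w.geW a X :=
  w.ge_iso (sAdd (-b) (b - a) (-a) (by ring) X).symm
    (w.ge_shift_of_nonneg hX (b - a) (by omega))

lemma le_leW {X : C} (hX : w.le X) : w.leW 0 X := by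
  show w.le (X⟦(-0:ℤ)⟧)
  rw [neg_zero]
  exact w.le_iso ((shiftFunctorZero C ℤ).app X).symm hX

lemma leW_le {X : C} (hX : w.leW 0 X) : w.le X := by
  have h : w.le (X⟦(-0:ℤ)⟧) := hX
  rw [neg_zero] at h
  exact w.le_iso ((shiftFunctorZero C ℤ).app X) h

lemma ge_geW {X : C} (hX : w.ge X) : w.geW 0 X := by
  show w.ge (X⟦(-0:ℤ)⟧)
  rw [neg_zero]
  exact w.ge_iso ((shiftFunctorZero C ℤ).app X).symm hX

lemma geW_ge {X : C} (hX : w.geW 0 X) : w.ge X := by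
  have h : w.ge (X⟦(-0:ℤ)⟧) := hX
  rw [neg_zero] at h
  exact w.ge_iso ((shiftFunctorZero C ℤ).app X) h

lemma homZero_aux {P V : C} (hP : w.le P) (hV : w.ge V) :
    ∀ (k : ℕ) (V : C), w.ge V → ∀ f : P ⟶ (V⟦(1:ℤ)⟧)⟦(k : ℤ)⟧, f = 0 := by
  intro k
  induction k with
  | zero =>
    intro V hV f
    have h0 : f ≫ ((shiftFunctorZero C ℤ).app (V⟦(1:ℤ)⟧)).hom = 0 := by
      exact w.orth _ hP hV
    have := congrArg (fun x => x ≫ ((shiftFunctorZero C ℤ).app (V⟦(1:ℤ)⟧)).inv) h0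
    simpa using this
  | succ k ih =>
    intro V hV f
    have e : ((V⟦(1:ℤ)⟧)⟦((k+1 : ℕ) : ℤ)⟧) ≅ (((V⟦(1:ℤ)⟧)⟦(1:ℤ)⟧)⟦(k : ℤ)⟧) :=
      sAdd 1 (k : ℤ) ((k+1 : ℕ) : ℤ) (by push_cast; ring) (V⟦(1:ℤ)⟧)
    have h0 : f ≫ e.hom = 0 := ih (V⟦(1:ℤ)⟧) (w.ge_shift _ hV) _
    have := congrArg (fun x => x ≫ e.inv) h0
    simpa using this

lemma homZero {a b : ℤ} {X Y : C} (hX : w.leW a X) (hY : w.geW b Y) (hab : a < b)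
    (f : X ⟶ Y) : f = 0 := by
  have e : (Y⟦-a⟧) ≅ (((Y⟦-b⟧)⟦(1:ℤ)⟧)⟦(((b - a - 1).natAbs : ℕ) : ℤ)⟧) :=
    (sAdd (-b) (b - a) (-a) (by ring) Y) ≪≫
      (sAdd 1 (((b - a - 1).natAbs : ℕ) : ℤ) (b - a) (by omega) (Y⟦-b⟧))
  have h0 : (shiftFunctor C (-a)).map f ≫ e.hom = 0 :=
    w.homZero_aux hX hY ((b - a - 1).natAbs) (Y⟦-b⟧) hY _
  have h1 : (shiftFunctor C (-a)).map f = 0 := by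
    have := congrArg (fun x => x ≫ e.inv) h0
    simpa using this
  apply (shiftFunctor C (-a)).map_injective
  simpa using h1

lemma decomp (n : ℤ) (M : C) :
    ∃ (P Q : C) (f : P ⟶ M) (g : M ⟶ Q) (hh : Q ⟶ P⟦(1:ℤ)⟧),
      (Triangle.mk f g hh ∈ distTriang C) ∧ w.leW n P ∧ w.geW (n+1) Q := by
  obtain ⟨P₀, Q₀, f₀, g₀, h₀, hTd, hP₀, hQ₀⟩ := w.exists_weight_filtration (M⟦-n⟧)
  have hTn : (Triangle.shiftFunctor C n).obj (Triangle.mk f₀ g₀ h₀) ∈ distTriang C := by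
    have := Pretriangulated.Triangle.shift_distinguished _ hTd n
    rwa [Pretriangulated.Triangle.shiftFunctor_eq] at this
  set Tn := (Triangle.shiftFunctor C n).obj (Triangle.mk f₀ g₀ h₀) with hTndef
  have e : ((M⟦-n⟧)⟦n⟧) ≅ M :=
    (sAdd (-n) n 0 (by ring) M).symm ≪≫ (shiftFunctorZero C ℤ).app M
  refine ⟨P₀⟦n⟧, Q₀⟦n⟧, Tn.mor₁ ≫ e.hom, e.inv ≫ Tn.mor₂, Tn.mor₃, ?_, ?_, ?_⟩
  · refine Pretriangulated.isomorphic_distinguished _ hTn _ ?_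
    refine Triangle.isoMk _ _ (Iso.refl _) e.symm (Iso.refl _) ?_ ?_ ?_
    · exact (Category.assoc _ _ _).trans ((congrArg _ e.hom_inv_id).trans
        ((Category.comp_id _).trans (Category.id_comp _).symm))
    · exact Category.comp_id _
    · exact ((congrArg _ (CategoryTheory.Functor.map_id _ _)).trans (Category.comp_id _)).trans
        (Category.id_comp _).symm
  · exact w.le_iso ((sAdd n (-n) 0 (by ring) P₀).symm ≪≫
      (shiftFunctorZero C ℤ).app P₀).symm hP₀
  · exact w.ge_iso (sAdd n (-(n+1)) (-1) (by ring) Q₀) hQ₀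

lemma le_ext (T : Triangle C) (hT : T ∈ distTriang C)
    (h₁ : w.le T.obj₁) (h₃ : w.le T.obj₃) : w.le T.obj₂ := by
  obtain ⟨P, Q, f, g, hh, hTd, hP, hQ⟩ := w.exists_weight_filtration T.obj₂
  have hQ1 : w.geW 1 Q := hQ
  have hg : g = 0 := by
    have h1 : T.mor₁ ≫ g = 0 := w.homZero (w.le_leW h₁) hQ1 (by norm_num) _
    obtain ⟨g₂, hg₂⟩ := Pretriangulated.Triangle.yoneda_exact₂ T hT g h1
    rw [hg₂, w.homZero (w.le_leW h₃) hQ1 (by norm_num) g₂, comp_zero]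
  obtain ⟨ρ, hρ⟩ := Pretriangulated.Triangle.coyoneda_exact₂ _ hTd (𝟙 T.obj₂)
    (by change 𝟙 T.obj₂ ≫ g = 0; rw [hg, comp_zero])
  exact w.le_retract ρ f hρ.symm hP

lemma ge_ext (T : Triangle C) (hT : T ∈ distTriang C)
    (h₁ : w.ge T.obj₁) (h₃ : w.ge T.obj₃) : w.ge T.obj₂ := by
  obtain ⟨P, Q, f, g, hh, hTd, hP, hQ⟩ := w.decomp (-1) T.obj₂
  have hf : f = 0 := by
    have h1 : f ≫ T.mor₂ = 0 := w.homZero hP (w.ge_geW h₃) (by norm_num) _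
    obtain ⟨f₁, hf₁⟩ := Pretriangulated.Triangle.coyoneda_exact₂ T hT f h1
    rw [hf₁, w.homZero hP (w.ge_geW h₁) (by norm_num) f₁, zero_comp]
  obtain ⟨ρ, hρ⟩ := Pretriangulated.Triangle.yoneda_exact₂ _ hTd (𝟙 T.obj₂)
    (by change f ≫ 𝟙 T.obj₂ = 0; rw [hf, zero_comp])
  exact w.ge_retract g ρ hρ.symm (w.geW_ge (w.geW_congr (by norm_num) hQ))

lemma ge_char (X : C) (hX : ∀ Z : C, w.leW (-1) Z → ∀ f : Z ⟶ X, f = 0) : w.ge X := by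
  obtain ⟨P, Q, f, g, hh, hTd, hP, hQ⟩ := w.decomp (-1) X
  obtain ⟨ρ, hρ⟩ := Pretriangulated.Triangle.yoneda_exact₂ _ hTd (𝟙 X)
    (by change f ≫ 𝟙 X = 0; rw [hX P hP f, zero_comp])
  exact w.ge_retract g ρ hρ.symm (w.geW_ge (w.geW_congr (by norm_num) hQ))

lemma le_char (X : C) (hX : ∀ Z : C, w.geW 1 Z → ∀ f : X ⟶ Z, f = 0) : w.le X := by
  obtain ⟨P, Q, f, g, hh, hTd, hP, hQ⟩ := w.decomp 0 X
  have hg : g = 0 := hX Q (w.geW_congr (by norm_num) hQ) g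
  obtain ⟨ρ, hρ⟩ := Pretriangulated.Triangle.coyoneda_exact₂ _ hTd (𝟙 X)
    (by change 𝟙 X ≫ g = 0; rw [hg, comp_zero])
  exact w.le_retract ρ f hρ.symm (w.leW_le hP)

end WeightStructure

/-- **Theorem 2I, abstract form (cf. [W4, Cor. 2.5]).** Let `A ∈ C_{w≤0}`, `B ∈ C_{w≥0}`,
`u : A → B`, and suppose there is a distinguished triangle `A → B → E → A[1]` with first
map `u` in which `E` is without weights `0` and `1`. Then `A` is without weight `-1`,
`B` is without weight `1`, the induced morphism `Gr₀(u) : Gr₀ A → Gr₀ B` is an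
isomorphism, and for any factorization `A → M → B` of `u` with `M` in the heart, `Gr₀ A`
is canonically a direct factor of `M`, compatibly with the factorization. -/
theorem gr_zero_iso_and_direct_factor
    {C : Type*} [Category C] [HasZeroObject C] [Preadditive C]
    [HasShift C ℤ] [∀ n : ℤ, (shiftFunctor C n).Additive] [Pretriangulated C]
    (w : WeightStructure C)
    (A B E : C) (hA : w.le A) (hB : w.ge B)
    (u : A ⟶ B) (g : B ⟶ E) (h : E ⟶ A⟦(1 : ℤ)⟧)
    (hT : Triangle.mk u g h ∈ distTriang C)
    (hE : w.WithoutWeights 0 1 E) :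
    w.WithoutWeights (-1) (-1) A ∧
    w.WithoutWeights 1 1 B ∧
    (∀ (Am A₀ : C) (a₁ : Am ⟶ A) (pA : A ⟶ A₀) (dA : A₀ ⟶ Am⟦(1 : ℤ)⟧),
      (Triangle.mk a₁ pA dA ∈ distTriang C) → w.leW (-2) Am → w.ge A₀ →
      ∀ (B₀ Bp : C) (iB : B₀ ⟶ B) (b₂ : B ⟶ Bp) (dB : Bp ⟶ B₀⟦(1 : ℤ)⟧),
        (Triangle.mk iB b₂ dB ∈ distTriang C) → w.le B₀ → w.geW 2 Bp →
        ∃ φ : A₀ ≅ B₀, pA ≫ φ.hom ≫ iB = u ∧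
          ∀ (M : C), w.heart M → ∀ (p : A ⟶ M) (q : M ⟶ B), p ≫ q = u →
            ∃ (s : A₀ ⟶ M) (r : M ⟶ A₀),
              s ≫ r = 𝟙 A₀ ∧ p ≫ r = pA ∧ s ≫ q = φ.hom ≫ iB) := by
  classical
  obtain ⟨E', E'', e₁, e₂, e₃, hS, hE'0, hE''0⟩ := hE
  have hE' : w.leW (-1) E' := w.leW_congr (by norm_num) hE'0
  have hE'' : w.geW 2 E'' := w.geW_congr (by norm_num) hE''0
  have hAw : w.leW 0 A := w.le_leW hA
  have hBw : w.geW 0 B := w.ge_geW hB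
  have hEm2 : w.leW (-2) (E'⟦(-1:ℤ)⟧) := w.leW_congr (by norm_num) (w.leW_shift hE' (-1))
  have hEpp1 : w.geW 1 (E''⟦(-1:ℤ)⟧) := w.geW_congr (by norm_num) (w.geW_shift hE'' (-1))
  have hAsh1 : w.leW 1 (A⟦(1:ℤ)⟧) := w.leW_congr (by norm_num) (w.leW_shift hAw 1)
  have hE'sh1 : w.leW 0 (E'⟦(1:ℤ)⟧) := w.leW_congr (by norm_num) (w.leW_shift hE' 1)
  have hEm1sh : w.leW (-1) ((E'⟦(-1:ℤ)⟧)⟦(1:ℤ)⟧) := w.leW_congr (by norm_num) (w.leW_shift hEm2 1)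
  -- the shifted triangle S₁ = S⟦-1⟧ and the inverse rotation T₀ of the given triangle
  have hS₁ : (Triangle.shiftFunctor C (-1)).obj (Triangle.mk e₁ e₂ e₃) ∈ distTriang C := by
    have := Triangle.shift_distinguished (Triangle.mk e₁ e₂ e₃) hS (-1)
    rwa [Triangle.shiftFunctor_eq] at this
  set S₁ := (Triangle.shiftFunctor C (-1)).obj (Triangle.mk e₁ e₂ e₃) with hS₁def
  have hT₀ : (Triangle.mk u g h).invRotate ∈ distTriang C := inv_rot_of_distTriang _ hT
  set T₀ := (Triangle.mk u g h).invRotate with hT₀def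
  have hT₀m₂ : T₀.mor₂ = u := rfl
  have hS₁m₂ : S₁.mor₂ = (-1 : ℤ).negOnePow • e₂⟦(-1:ℤ)⟧' := rfl
  have hS₁o₁ : S₁.obj₁ = E'⟦(-1:ℤ)⟧ := rfl
  have hS₁o₃ : S₁.obj₃ = E''⟦(-1:ℤ)⟧ := rfl
  have hT₀o₁ : T₀.obj₁ = E⟦(-1:ℤ)⟧ := rfl
  -- construct N, the weight ≥ 0 part of A
  obtain ⟨N, ν, d, hT₁⟩ := distinguished_cocone_triangle (S₁.mor₁ ≫ T₀.mor₁)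
  -- TR3 completions m₁ : E''⟦-1⟧ ⟶ N and m₂ : N ⟶ B
  obtain ⟨m₁, hm₁a, hm₁b⟩ := complete_distinguished_triangle_morphism S₁
    (Triangle.mk (S₁.mor₁ ≫ T₀.mor₁) ν d) hS₁ hT₁ (𝟙 _) T₀.mor₁ (by exact (Category.id_comp _).symm)
  obtain ⟨m₂, hm₂a, hm₂b⟩ := complete_distinguished_triangle_morphism
    (Triangle.mk (S₁.mor₁ ≫ T₀.mor₁) ν d) T₀ hT₁ hT₀ S₁.mor₁ (𝟙 _) (by exact Category.comp_id _)
  change S₁.mor₂ ≫ m₁ = T₀.mor₁ ≫ ν at hm₁a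
  change S₁.mor₃ ≫ (𝟙 S₁.obj₁)⟦(1:ℤ)⟧' = m₁ ≫ d at hm₁b
  change ν ≫ m₂ = 𝟙 _ ≫ T₀.mor₂ at hm₂a
  change d ≫ S₁.mor₁⟦(1:ℤ)⟧' = m₂ ≫ T₀.mor₃ at hm₂b
  rw [CategoryTheory.Functor.map_id, Category.comp_id] at hm₁b
  rw [Category.id_comp] at hm₂a
  rw [hT₀m₂] at hm₂a
  obtain ⟨m₂', hm₂eq⟩ : ∃ f : N ⟶ B, f = m₂ := ⟨m₂, rfl⟩
  have hm₂a' : ν ≫ m₂' = u := by rw [hm₂eq]; exact hm₂a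
  have hm₂b' : d ≫ S₁.mor₁⟦(1:ℤ)⟧' = m₂' ≫ T₀.mor₃ := by rw [hm₂eq]; exact hm₂b
  -- hm₁a : S₁.mor₂ ≫ m₁ = T₀.mor₁ ≫ ν
  -- hm₁b : S₁.mor₃ = m₁ ≫ d
  -- hm₂a : ν ≫ m₂ = u
  -- hm₂b : d ≫ S₁.mor₁⟦1⟧' = m₂ ≫ T₀.mor₃
  -- N has weights ≥ 0
  have hNge : w.ge N := by
    refine w.ge_char N ?_
    intro Z hZ z
    have hzm₂ : z ≫ m₂' = 0 := w.homZero hZ hBw (by norm_num) _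
    have hzd : z ≫ d = 0 := by
      have h1 : (z ≫ d) ≫ S₁.rotate.mor₃ = 0 := by
        have : (z ≫ d) ≫ S₁.mor₁⟦(1:ℤ)⟧' = 0 := by
          erw [Category.assoc, hm₂b', ← Category.assoc, hzm₂, zero_comp]
        dsimp [Triangle.rotate]
        erw [Preadditive.comp_neg, this, neg_zero]
        rfl
      obtain ⟨gg, hgg⟩ := Triangle.coyoneda_exact₃ S₁.rotate
        (rot_of_distTriang _ hS₁) (z ≫ d) h1
      have : gg = 0 := w.homZero hZ hEpp1 (by norm_num) gg
      erw [hgg, this, zero_comp]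
      rfl
    obtain ⟨y, hy⟩ := Triangle.coyoneda_exact₃ _ hT₁ z hzd
    change z = y ≫ ν at hy
    have hyu : y ≫ u = 0 := by
      erw [← hm₂a', ← Category.assoc, ← hy, hzm₂]
    obtain ⟨x, hx⟩ := Triangle.coyoneda_exact₂ T₀ hT₀ y (by rw [hT₀m₂]; exact hyu)
    have hx2 : x ≫ S₁.mor₂ = 0 := w.homZero hZ hEpp1 (by norm_num) _
    calc z = y ≫ ν := hy
    _ = x ≫ T₀.mor₁ ≫ ν := by erw [hx, Category.assoc]; rfl
    _ = (x ≫ S₁.mor₂ ≫ m₁ : Z ⟶ N) := by erw [hm₁a]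
    _ = 0 := by erw [← Category.assoc, hx2, zero_comp]
  have hNgeW : w.geW 0 N := w.ge_geW hNge
  -- N has weights ≤ 0
  have hNle : w.le N := by
    have hEsh : w.leW 0 ((E'⟦(-1:ℤ)⟧)⟦(1:ℤ)⟧) := w.leW_mono (by norm_num) hEm1sh
    have := w.le_ext (Triangle.mk (S₁.mor₁ ≫ T₀.mor₁) ν d).rotate
      (rot_of_distTriang _ hT₁) hA (w.leW_le hEsh)
    exact this
  -- Part 1 : A is without weight -1
  have part1 : w.WithoutWeights (-1) (-1) A := by
    refine ⟨E'⟦(-1:ℤ)⟧, N, S₁.mor₁ ≫ T₀.mor₁, ν, d, hT₁,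
      w.leW_congr (by norm_num) hEm2, w.geW_congr (by norm_num) hNgeW⟩
  -- Part 2 constructions
  obtain ⟨R, r, s, hT''⟩ := distinguished_cocone_triangle (g ≫ e₂)
  obtain ⟨m, hma, hmb⟩ := complete_distinguished_triangle_morphism
    (Triangle.mk u g h).rotate (Triangle.mk (g ≫ e₂) r s)
    (rot_of_distTriang _ hT) hT'' (𝟙 _) e₂ (by exact (Category.id_comp _).symm)
  obtain ⟨nn, hna, hnb⟩ := complete_distinguished_triangle_morphism
    (Triangle.mk (g ≫ e₂) r s) (Triangle.mk e₁ e₂ e₃).rotate hT''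
    (rot_of_distTriang _ hS) g (𝟙 _) (by exact Category.comp_id _)
  dsimp [Triangle.rotate] at hma hmb hna hnb
  erw [CategoryTheory.Functor.map_id, Category.comp_id] at hmb
  erw [Category.id_comp] at hna
  obtain ⟨m', hmeq⟩ : ∃ f : A⟦(1:ℤ)⟧ ⟶ R, f = m := ⟨m, rfl⟩
  have hma' : h ≫ m' = e₂ ≫ r := by rw [hmeq]; exact hma
  have hmb' : -(u⟦(1:ℤ)⟧') = m' ≫ s := by rw [hmeq]; exact hmb
  -- hma : h ≫ m = e₂ ≫ r ; hmb : -u⟦1⟧' = m ≫ s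
  -- hna : r ≫ nn = e₃ ; hnb : s ≫ g⟦1⟧' = nn ≫ (-e₁⟦1⟧')
  -- R is concentrated in weights ≥ 2 (after shifting : R⟦-1⟧ has weights ≤ 0)
  have hRvan : ∀ Z : C, w.geW 2 Z → ∀ f : R ⟶ Z, f = 0 := by
    intro Z hZ f
    have hmf : m' ≫ f = 0 := w.homZero hAsh1 hZ (by norm_num) _
    have hrf : r ≫ f = 0 := by
      have h1 : e₂ ≫ (r ≫ f) = 0 := by
        rw [← Category.assoc, ← hma', Category.assoc, hmf, comp_zero]
      obtain ⟨g', hg'⟩ := Triangle.yoneda_exact₃ _ hS (r ≫ f) h1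
      have : g' = 0 := w.homZero hE'sh1 hZ (by norm_num) g'
      erw [hg', this, comp_zero]
      rfl
    obtain ⟨ξ, hξ⟩ := Triangle.yoneda_exact₃ _ hT'' f hrf
    change f = s ≫ ξ at hξ
    have hTsh : (Triangle.shiftFunctor C 1).obj (Triangle.mk u g h) ∈ distTriang C := by
      have := Triangle.shift_distinguished (Triangle.mk u g h) hT 1
      rwa [Triangle.shiftFunctor_eq] at this
    have huξ : ((1:ℤ).negOnePow • u⟦(1:ℤ)⟧') ≫ ξ = 0 := by
      have : u⟦(1:ℤ)⟧' ≫ ξ = 0 := by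
        have h2 := congrArg (fun x => x ≫ ξ) hmb'
        change (-(u⟦(1:ℤ)⟧')) ≫ ξ = (m' ≫ s) ≫ ξ at h2
        erw [Category.assoc, ← hξ, hmf] at h2
        erw [Preadditive.neg_comp, neg_eq_zero] at h2; exact h2
      erw [Linear.units_smul_comp, this, smul_zero]
    obtain ⟨η, hη⟩ := Triangle.yoneda_exact₂ _ hTsh ξ huξ
    change ξ = ((1:ℤ).negOnePow • g⟦(1:ℤ)⟧') ≫ η at hη
    have he₁η : e₁⟦(1:ℤ)⟧' ≫ η = 0 := w.homZero hE'sh1 hZ (by norm_num) _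
    erw [hξ, hη, Linear.units_smul_comp, Linear.comp_units_smul, ← Category.assoc]
    have hsg : s ≫ g⟦(1:ℤ)⟧' = -(nn ≫ e₁⟦(1:ℤ)⟧') := by
      erw [hnb, Preadditive.comp_neg]
      rfl
    erw [hsg, Preadditive.neg_comp, Category.assoc, he₁η, comp_zero, neg_zero, smul_zero]
  have hRle : w.le (R⟦(-1:ℤ)⟧) := by
    refine w.le_char _ ?_
    intro Z hZ f
    have hf₁ : (shiftEquiv C (1:ℤ)).counitIso.inv.app R ≫ f⟦(1:ℤ)⟧' = 0 :=
      hRvan _ (w.geW_congr (show (1:ℤ)+1 = 2 by norm_num) (w.geW_shift hZ 1)) _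
    have hf2 : f⟦(1:ℤ)⟧' = 0 := by
      have := congrArg (fun x => (shiftEquiv C (1:ℤ)).counitIso.hom.app R ≫ x) hf₁
      erw [Iso.hom_inv_id_app_assoc, comp_zero] at this; exact this
    apply (shiftFunctor C (1:ℤ)).map_injective
    simpa using hf2
  have hRleW : w.leW 0 (R⟦(-1:ℤ)⟧) := w.le_leW hRle
  -- Part 2 : B is without weight 1
  have hT₂ : (Triangle.mk (g ≫ e₂) r s).invRotate ∈ distTriang C :=
    inv_rot_of_distTriang _ hT''
  set T₂ := (Triangle.mk (g ≫ e₂) r s).invRotate with hT₂def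
  have hT₂m₂ : T₂.mor₂ = g ≫ e₂ := rfl
  have part2 : w.WithoutWeights 1 1 B := by
    refine ⟨R⟦(-1:ℤ)⟧, E'', T₂.mor₁, T₂.mor₂, T₂.mor₃, hT₂,
      w.leW_congr (by norm_num) hRleW, w.geW_congr (by norm_num) hE''⟩
  -- the canonical map μ : A ⟶ R⟦-1⟧ and its basic identities
  set μ : A ⟶ R⟦(-1:ℤ)⟧ := (shiftEquiv C (1:ℤ)).unitIso.hom.app A ≫ m'⟦(-1:ℤ)⟧' with hμdef
  have hms : m' ≫ s = -(u⟦(1:ℤ)⟧') := hmb'.symm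
  have hμι : μ ≫ T₂.mor₁ = u := by
    show ((shiftEquiv C (1:ℤ)).unitIso.hom.app A ≫ m'⟦(-1:ℤ)⟧') ≫
        (-(s⟦(-1:ℤ)⟧' ≫ (shiftEquiv C (1:ℤ)).unitIso.inv.app B)) = u
    have hnat := (shiftEquiv C (1:ℤ)).unitIso.hom.naturality u
    simp only [Functor.comp_map, Functor.id_map, shiftEquiv'_functor, shiftEquiv'_inverse] at hnat
    erw [Preadditive.comp_neg, Category.assoc, ← Functor.map_comp_assoc, hms,
      Functor.map_neg, Preadditive.neg_comp, Preadditive.comp_neg, neg_neg,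
      ← Category.assoc, ← hnat, Category.assoc, Iso.hom_inv_id_app, Category.comp_id]
  have hδμ : T₀.mor₁ ≫ μ = -(e₂⟦(-1:ℤ)⟧' ≫ r⟦(-1:ℤ)⟧') := by
    show (-(h⟦(-1:ℤ)⟧' ≫ (shiftEquiv C (1:ℤ)).unitIso.inv.app A)) ≫
        ((shiftEquiv C (1:ℤ)).unitIso.hom.app A ≫ m'⟦(-1:ℤ)⟧') = -(e₂⟦(-1:ℤ)⟧' ≫ r⟦(-1:ℤ)⟧')
    erw [Preadditive.neg_comp, Category.assoc, Iso.inv_hom_id_app_assoc,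
      ← Functor.map_comp, hma', Functor.map_comp]
  -- Lemma A : maps from w≤0 objects to B lift along m₂ : N ⟶ B
  have LemA : ∀ (Z : C), w.le Z → ∀ β : Z ⟶ B, ∃ x : Z ⟶ N, x ≫ m₂' = β := by
    intro Z hZ β
    have hg2 : w.geW 2 ((E''⟦(-1:ℤ)⟧)⟦(1:ℤ)⟧) :=
      w.geW_congr (by norm_num) (w.geW_shift hEpp1 1)
    have h1 : (β ≫ T₀.mor₃) ≫ S₁.rotate.rotate.mor₃ = 0 := by
      have hv : (β ≫ T₀.mor₃) ≫ S₁.mor₂⟦(1:ℤ)⟧' = 0 :=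
        w.homZero (w.le_leW hZ) hg2 (by norm_num) _
      dsimp [Triangle.rotate]
      erw [Preadditive.comp_neg, hv, neg_zero]
      rfl
    obtain ⟨γ', hγ'⟩ := Triangle.coyoneda_exact₃ _
      (rot_of_distTriang _ (rot_of_distTriang _ hS₁)) (β ≫ T₀.mor₃) h1
    dsimp [Triangle.rotate] at hγ'
    have hγ : β ≫ T₀.mor₃ = (-γ') ≫ S₁.mor₁⟦(1:ℤ)⟧' := by
      erw [hγ', Preadditive.comp_neg, Preadditive.neg_comp]
      rfl
    have h3 : (-γ') ≫ (Triangle.mk (S₁.mor₁ ≫ T₀.mor₁) ν d).rotate.mor₃ = 0 := by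
      change (-γ') ≫ (-(S₁.mor₁ ≫ T₀.mor₁)⟦(1:ℤ)⟧') = 0
      erw [Preadditive.comp_neg, neg_eq_zero, Functor.map_comp, ← Category.assoc, ← hγ,
        Category.assoc, comp_distTriang_mor_zero₃₁ _ hT₀, comp_zero]
    obtain ⟨x'0, hx'0⟩ := Triangle.coyoneda_exact₃ _ (rot_of_distTriang _ hT₁) (-γ') h3
    obtain ⟨x', hx'eq⟩ : ∃ f : Z ⟶ N, f = x'0 := ⟨x'0, rfl⟩
    have hx' : (-γ') = x' ≫ d := by rw [hx'eq]; exact hx'0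
    have h4 : (β - (x' ≫ m₂' : Z ⟶ B)) ≫ T₀.mor₃ = 0 := by
      erw [Preadditive.sub_comp, Category.assoc x' m₂' T₀.mor₃, ← hm₂b', ← Category.assoc x' d,
        ← hx', hγ, sub_self]
    obtain ⟨a0, ha0⟩ := Triangle.coyoneda_exact₃ _ hT₀ (β - (x' ≫ m₂' : Z ⟶ B)) h4
    obtain ⟨a, haeq⟩ : ∃ f : Z ⟶ A, f = a0 := ⟨a0, rfl⟩
    have ha : β - (x' ≫ m₂' : Z ⟶ B) = a ≫ u := by
      rw [haeq, ← hT₀m₂]; exact ha0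
    refine ⟨x' + a ≫ ν, ?_⟩
    erw [Preadditive.add_comp, Category.assoc, hm₂a', ← ha]
    abel
  -- Lemma B : maps from A to w≥0 objects extend along μ : A ⟶ R⟦-1⟧
  have LemB : ∀ (Z : C), w.ge Z → ∀ α : A ⟶ Z, ∃ t : R⟦(-1:ℤ)⟧ ⟶ Z, μ ≫ t = α := by
    intro Z hZ α
    have h1 : S₁.mor₁ ≫ (T₀.mor₁ ≫ α) = 0 := by
      erw [← Category.assoc]
      exact w.homZero hEm2 (w.ge_geW hZ) (by norm_num) _
    obtain ⟨γ, hγ⟩ := Triangle.yoneda_exact₂ _ hS₁ (T₀.mor₁ ≫ α) h1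
    have hT''₁ : (Triangle.shiftFunctor C (-1)).obj (Triangle.mk (g ≫ e₂) r s)
        ∈ distTriang C := by
      have := Triangle.shift_distinguished (Triangle.mk (g ≫ e₂) r s) hT'' (-1)
      rwa [Triangle.shiftFunctor_eq] at this
    have hgh : g ≫ h = 0 := comp_distTriang_mor_zero₂₃ _ hT
    have hke : g⟦(-1:ℤ)⟧' ≫ T₀.mor₁ = 0 := by
      show g⟦(-1:ℤ)⟧' ≫ (-(h⟦(-1:ℤ)⟧' ≫ (shiftEquiv C (1:ℤ)).unitIso.inv.app A)) = 0
      erw [Preadditive.comp_neg, ← Category.assoc, ← Functor.map_comp, hgh,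
        Functor.map_zero, zero_comp, neg_zero]
    have hs1 : ((-1:ℤ).negOnePow) • (e₂⟦(-1:ℤ)⟧' ≫ γ) = T₀.mor₁ ≫ α := by
      erw [← Linear.units_smul_comp, ← hS₁m₂, ← hγ]
      rfl
    have hx0 : (g ≫ e₂)⟦(-1:ℤ)⟧' ≫ γ = 0 := by
      have h5 : ((-1:ℤ).negOnePow) • ((g ≫ e₂)⟦(-1:ℤ)⟧' ≫ γ) = 0 := by
        erw [Functor.map_comp, Category.assoc, ← Linear.comp_units_smul, hs1,
          ← Category.assoc, hke, zero_comp]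
      have h6 := congrArg (fun x => ((-1:ℤ).negOnePow)⁻¹ • x) h5
      simpa using h6
    have h2 : ((Triangle.shiftFunctor C (-1)).obj (Triangle.mk (g ≫ e₂) r s)).mor₁ ≫ γ
        = 0 := by
      change ((-1:ℤ).negOnePow • (g ≫ e₂)⟦(-1:ℤ)⟧') ≫ γ = 0
      erw [Linear.units_smul_comp, hx0, smul_zero]
    obtain ⟨t'0, ht'0⟩ := Triangle.yoneda_exact₂ _ hT''₁ γ h2
    obtain ⟨t', ht'eq⟩ : ∃ f : R⟦(-1:ℤ)⟧ ⟶ Z, f = t'0 := ⟨t'0, rfl⟩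
    have ht' : γ = ((-1:ℤ).negOnePow • r⟦(-1:ℤ)⟧') ≫ t' := by rw [ht'eq]; exact ht'0
    have key : T₀.mor₁ ≫ (α + (μ ≫ t' : A ⟶ Z)) = 0 := by
      erw [Preadditive.comp_add, hγ, ht', hS₁m₂, ← Category.assoc (T₀.mor₁) μ t', hδμ]
      erw [Linear.units_smul_comp, Linear.units_smul_comp, Linear.comp_units_smul,
        smul_smul, Int.units_mul_self, one_smul, Preadditive.neg_comp, Category.assoc]
      exact add_neg_cancel _
    obtain ⟨y0, hy20⟩ := Triangle.yoneda_exact₂ _ hT₀ (α + (μ ≫ t' : A ⟶ Z)) key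
    obtain ⟨y, hyeq⟩ : ∃ f : B ⟶ Z, f = y0 := ⟨y0, rfl⟩
    have hy2 : α + (μ ≫ t' : A ⟶ Z) = u ≫ y := by rw [hyeq, ← hT₀m₂]; exact hy20
    refine ⟨-t' + (T₂.mor₁ ≫ y : R⟦(-1:ℤ)⟧ ⟶ Z), ?_⟩
    erw [Preadditive.comp_add, Preadditive.comp_neg, ← Category.assoc, hμι, ← hy2]
    abel
  -- the comparison map χ : N ⟶ R⟦-1⟧ and its invertibility
  have hm₂q : m₂' ≫ T₂.mor₂ = 0 := w.homZero (w.le_leW hNle) hE'' (by norm_num) _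
  obtain ⟨χ0, hχ0⟩ := Triangle.coyoneda_exact₂ _ hT₂ m₂' hm₂q
  obtain ⟨χ, hχeq⟩ : ∃ f : N ⟶ R⟦(-1:ℤ)⟧, f = χ0 := ⟨χ0, rfl⟩
  have hχ : m₂' = χ ≫ T₂.mor₁ := by rw [hχeq]; exact hχ0
  have hT₃ := inv_rot_of_distTriang _ hT₂
  have J2' : ∀ (X : C), w.leW 0 X → ∀ α : X ⟶ R⟦(-1:ℤ)⟧, α ≫ T₂.mor₁ = 0 → α = 0 := by
    intro X hX α hα
    obtain ⟨β, hβ⟩ := Triangle.coyoneda_exact₂ _ hT₃ α hα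
    erw [hβ, w.homZero hX hEpp1 (by norm_num) β, zero_comp]
    rfl
  have hμχ : μ = ν ≫ χ := by
    have h0 : (μ - (ν ≫ χ : A ⟶ R⟦(-1:ℤ)⟧)) ≫ T₂.mor₁ = 0 := by
      erw [Preadditive.sub_comp, hμι, Category.assoc, ← hχ, hm₂a', sub_self]
    have h1 := J2' A hAw _ h0
    rwa [sub_eq_zero] at h1
  obtain ⟨Cn, κ, lam, hU⟩ := distinguished_cocone_triangle χ
  have hχκ : χ ≫ κ = 0 := comp_distTriang_mor_zero₁₂ _ hU
  have hCnL : ∀ (Z : C), w.le Z → ∀ z : Z ⟶ Cn, z = 0 := by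
    intro Z hZ z
    have hge1 : w.geW 1 (N⟦(1:ℤ)⟧) := w.geW_congr (by norm_num) (w.geW_shift hNgeW 1)
    have h1 : z ≫ lam = 0 := w.homZero (w.le_leW hZ) hge1 (by norm_num) _
    obtain ⟨y0, hy0⟩ := Triangle.coyoneda_exact₃ _ hU z h1
    obtain ⟨y, hyeq⟩ : ∃ f : Z ⟶ R⟦(-1:ℤ)⟧, f = y0 := ⟨y0, rfl⟩
    have hy : z = y ≫ κ := by rw [hyeq]; exact hy0
    obtain ⟨x, hx⟩ := LemA Z hZ (y ≫ T₂.mor₁)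
    have h2 : (y - x ≫ χ) ≫ T₂.mor₁ = 0 := by
      erw [Preadditive.sub_comp, Category.assoc, ← hχ, hx, sub_self]
    have h3 := J2' Z (w.le_leW hZ) _ h2
    rw [sub_eq_zero] at h3
    rw [hy, h3, Category.assoc, hχκ, comp_zero]
  have hCnR : ∀ (Z : C), w.geW 1 Z → ∀ z : Cn ⟶ Z, z = 0 := by
    intro Z hZ z
    have h1 : κ ≫ z = 0 := w.homZero hRleW hZ (by norm_num) _
    obtain ⟨ζ, hζ⟩ := Triangle.yoneda_exact₃ _ hU z h1
    change z = lam ≫ ζ at hζ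
    have hgeZ1 : w.ge (Z⟦(-1:ℤ)⟧) := hZ
    obtain ⟨t, ht⟩ := LemB _ hgeZ1
      (ν ≫ ((shiftEquiv C (1:ℤ)).unitIso.hom.app N ≫ ζ⟦(-1:ℤ)⟧'))
    have h2 : ν ≫ (χ ≫ t - ((shiftEquiv C (1:ℤ)).unitIso.hom.app N ≫ ζ⟦(-1:ℤ)⟧' : N ⟶ Z⟦(-1:ℤ)⟧)) = 0 := by
      erw [Preadditive.comp_sub, ← Category.assoc, ← hμχ, ht, sub_self]
    obtain ⟨σ', hσ'⟩ := Triangle.yoneda_exact₃ _ hT₁ _ h2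
    dsimp at hσ'
    have hσ'0 : σ' = 0 :=
      w.homZero hEm1sh (w.ge_geW hgeZ1) (by norm_num) σ'
    rw [hσ'0, comp_zero] at hσ'
    have h3 : χ ≫ t = (shiftEquiv C (1:ℤ)).unitIso.hom.app N ≫ ζ⟦(-1:ℤ)⟧' :=
      sub_eq_zero.mp hσ'
    have hlam : (lam⟦(-1:ℤ)⟧' ≫ (shiftEquiv C (1:ℤ)).unitIso.inv.app N) ≫ χ = 0 := by
      have hlamchi : lam ≫ χ⟦(1:ℤ)⟧' = 0 := comp_distTriang_mor_zero₃₁ _ hU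
      have h5 : lam⟦(-1:ℤ)⟧' ≫ (χ⟦(1:ℤ)⟧')⟦(-1:ℤ)⟧' = 0 := by
        rw [← Functor.map_comp, hlamchi, Functor.map_zero]
      have hnat := (shiftEquiv C (1:ℤ)).unitIso.inv.naturality χ
      simp only [Functor.comp_map, Functor.id_map, shiftEquiv'_functor,
        shiftEquiv'_inverse] at hnat
      erw [Category.assoc, ← hnat, ← Category.assoc, h5, zero_comp]
    have hζm : ζ⟦(-1:ℤ)⟧' = (shiftEquiv C (1:ℤ)).unitIso.inv.app N ≫
        ((shiftEquiv C (1:ℤ)).unitIso.hom.app N ≫ ζ⟦(-1:ℤ)⟧') := by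
      erw [← Category.assoc, Iso.inv_hom_id_app, Category.id_comp]
      rfl
    have hz : z⟦(-1:ℤ)⟧' = 0 := by
      erw [hζ, Functor.map_comp, hζm, ← h3]
      simp only [← Category.assoc]
      erw [← Category.assoc, ← Category.assoc, hlam, zero_comp]
    apply (shiftFunctor C (-1:ℤ)).map_injective
    rw [hz, Functor.map_zero]
  have hCnZero : IsZero Cn := by
    obtain ⟨P, Q, f0, g0, hh0, hTd0, hP0, hQ0⟩ := w.decomp 0 Cn
    have hf0 : f0 = 0 := hCnL P (w.leW_le hP0) f0
    have hg0 : g0 = 0 := hCnR Q (w.geW_congr (by norm_num) hQ0) g0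
    obtain ⟨ρ, hρ⟩ := Triangle.yoneda_exact₂ _ hTd0 (𝟙 Cn) (by change f0 ≫ 𝟙 Cn = 0; rw [hf0, zero_comp])
    change 𝟙 Cn = g0 ≫ ρ at hρ
    erw [IsZero.iff_id_eq_zero, hρ, hg0, zero_comp]
  have hχIso : IsIso χ := (Triangle.isZero₃_iff_isIso₁ _ hU).1 hCnZero
  refine ⟨part1, part2, ?_⟩
  intro Am A₀ a₁ pA dA hTA hAm hA₀ B₀ Bp iB b₂ dB hTB hB₀ hBp
  have hA₀w : w.geW 0 A₀ := w.ge_geW hA₀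
  have hB₀w : w.leW 0 B₀ := w.le_leW hB₀
  have hAm1 : w.leW (-1) (Am⟦(1:ℤ)⟧) := w.leW_congr (by norm_num) (w.leW_shift hAm 1)
  have hBp1 : w.geW 1 (Bp⟦(-1:ℤ)⟧) := w.geW_congr (by norm_num) (w.geW_shift hBp (-1))
  have hB₀ge : w.ge B₀ := by
    have := w.ge_ext (Triangle.mk iB b₂ dB).invRotate (inv_rot_of_distTriang _ hTB)
      (w.geW_ge (w.geW_mono (by norm_num) hBp1)) hB
    exact this
  have hge_B₀w : w.geW 0 B₀ := w.ge_geW hB₀ge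
  -- injectivity lemmas
  have J1 : ∀ (X : C), w.geW 0 X → ∀ α : A₀ ⟶ X, pA ≫ α = 0 → α = 0 := by
    intro X hX α hα
    obtain ⟨β, hβ⟩ := Triangle.yoneda_exact₃ _ hTA α hα
    change α = dA ≫ β at hβ
    rw [hβ, w.homZero hAm1 hX (by norm_num) β, comp_zero]
  have J1' : ∀ (X : C), w.geW 0 X → ∀ α : N ⟶ X, ν ≫ α = 0 → α = 0 := by
    intro X hX α hα
    obtain ⟨β, hβ⟩ := Triangle.yoneda_exact₃ _ hT₁ α hα
    change α = d ≫ β at hβ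
    erw [hβ, w.homZero hEm1sh hX (by norm_num) β, comp_zero]
  have hTBinv := inv_rot_of_distTriang _ hTB
  have J2 : ∀ (X : C), w.leW 0 X → ∀ α : X ⟶ B₀, α ≫ iB = 0 → α = 0 := by
    intro X hX α hα
    obtain ⟨β, hβ⟩ := Triangle.coyoneda_exact₂ _ hTBinv α hα
    erw [hβ, w.homZero hX hBp1 (by norm_num) β, zero_comp]
    rfl
  -- the isomorphism θ : A₀ ≅ N
  obtain ⟨aa, haa⟩ := Triangle.coyoneda_exact₂ _ hT₁ a₁
    (w.homZero hAm hNgeW (by norm_num) _)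
  change a₁ = aa ≫ (S₁.mor₁ ≫ T₀.mor₁) at haa
  obtain ⟨θh0, hθ10, _⟩ := complete_distinguished_triangle_morphism (Triangle.mk a₁ pA dA)
    (Triangle.mk (S₁.mor₁ ≫ T₀.mor₁) ν d) hTA hT₁ aa (𝟙 A)
    (by exact (Category.comp_id _).trans haa)
  simp only [Triangle.mk_mor₂] at hθ10
  obtain ⟨θh, hθheq⟩ : ∃ f : A₀ ⟶ N, f = θh0 := ⟨θh0, rfl⟩
  have hθ1 : pA ≫ θh = ν := by
    rw [hθheq]; exact hθ10.trans (Category.id_comp ν)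
  obtain ⟨bb, hbb⟩ := Triangle.coyoneda_exact₂ _ hTA (S₁.mor₁ ≫ T₀.mor₁)
    (w.homZero hEm2 hA₀w (by norm_num) _)
  change S₁.mor₁ ≫ T₀.mor₁ = bb ≫ a₁ at hbb
  obtain ⟨θi0, hθ20, _⟩ := complete_distinguished_triangle_morphism
    (Triangle.mk (S₁.mor₁ ≫ T₀.mor₁) ν d) (Triangle.mk a₁ pA dA) hT₁ hTA bb (𝟙 A)
    (by exact (Category.comp_id _).trans hbb)
  simp only [Triangle.mk_mor₂] at hθ20
  obtain ⟨θi, hθieq⟩ : ∃ f : N ⟶ A₀, f = θi0 := ⟨θi0, rfl⟩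
  have hθ2 : ν ≫ θi = pA := by
    rw [hθieq]; exact hθ20.trans (Category.id_comp pA)
  have hθθ : θh ≫ θi = 𝟙 A₀ := by
    have h0 : pA ≫ (θh ≫ θi - 𝟙 A₀) = 0 := by
      erw [Preadditive.comp_sub, ← Category.assoc, hθ1, hθ2, Category.comp_id, sub_self]
    have h1 := J1 A₀ hA₀w _ h0
    rwa [sub_eq_zero] at h1
  have hθθ' : θi ≫ θh = 𝟙 N := by
    have h0 : ν ≫ (θi ≫ θh - 𝟙 N) = 0 := by
      erw [Preadditive.comp_sub, ← Category.assoc, hθ2, hθ1, Category.comp_id, sub_self]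
    have h1 := J1' N hNgeW _ h0
    rwa [sub_eq_zero] at h1
  -- the isomorphism η : B₀ ≅ R⟦-1⟧
  obtain ⟨ηh0, hηh0⟩ := Triangle.coyoneda_exact₂ _ hT₂ iB
    (w.homZero hB₀w hE'' (by norm_num) _)
  obtain ⟨ηh, hηheq⟩ : ∃ f : B₀ ⟶ R⟦(-1:ℤ)⟧, f = ηh0 := ⟨ηh0, rfl⟩
  have hηh : iB = ηh ≫ T₂.mor₁ := by rw [hηheq]; exact hηh0
  obtain ⟨ηi0, hηi0⟩ := Triangle.coyoneda_exact₂ _ hTB T₂.mor₁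
    (w.homZero hRleW hBp (by norm_num) _)
  change T₂.mor₁ = ηi0 ≫ iB at hηi0
  obtain ⟨ηi, hηieq⟩ : ∃ f : R⟦(-1:ℤ)⟧ ⟶ B₀, f = ηi0 := ⟨ηi0, rfl⟩
  have hηi : T₂.mor₁ = ηi ≫ iB := by rw [hηieq]; exact hηi0
  have hηη : ηh ≫ ηi = 𝟙 B₀ := by
    have h0 : (ηh ≫ ηi - 𝟙 B₀) ≫ iB = 0 := by
      erw [Preadditive.sub_comp, Category.assoc, ← hηi, ← hηh, Category.id_comp, sub_self]
    have h1 := J2 B₀ hB₀w _ h0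
    rwa [sub_eq_zero] at h1
  have hηη' : ηi ≫ ηh = 𝟙 (R⟦(-1:ℤ)⟧) := by
    have h0 : (ηi ≫ ηh - 𝟙 (R⟦(-1:ℤ)⟧)) ≫ T₂.mor₁ = 0 := by
      erw [Preadditive.sub_comp, Category.assoc, ← hηh, ← hηi, Category.id_comp, sub_self]
    have h1 := J2' _ hRleW _ h0
    rwa [sub_eq_zero] at h1
  haveI := hχIso
  have hφ1 : (θh ≫ χ ≫ ηi) ≫ (ηh ≫ inv χ ≫ θi) = 𝟙 A₀ := by
    have e1 : ηi ≫ (ηh ≫ inv χ ≫ θi) = inv χ ≫ θi := by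
      rw [← Category.assoc, hηη', Category.id_comp]
    rw [Category.assoc, Category.assoc, e1, IsIso.hom_inv_id_assoc, hθθ]
  have hφ2 : (ηh ≫ inv χ ≫ θi) ≫ (θh ≫ χ ≫ ηi) = 𝟙 B₀ := by
    have e1 : θi ≫ (θh ≫ χ ≫ ηi) = χ ≫ ηi := by
      rw [← Category.assoc, hθθ', Category.id_comp]
    rw [Category.assoc, Category.assoc, e1, IsIso.inv_hom_id_assoc, hηη]
  have hcore : pA ≫ (θh ≫ χ ≫ ηi) ≫ iB = u := by
    simp only [Category.assoc]
    erw [← hηi, ← hχ, ← Category.assoc, hθ1, hm₂a']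
  refine ⟨Iso.mk (θh ≫ χ ≫ ηi) (ηh ≫ inv χ ≫ θi) hφ1 hφ2, hcore, ?_⟩
  intro M hM p q hpq
  obtain ⟨p₀0, hp₀0⟩ := Triangle.yoneda_exact₂ _ hTA p
    (w.homZero hAm (w.ge_geW hM.2) (by norm_num) _)
  change p = pA ≫ p₀0 at hp₀0
  obtain ⟨p₀, hp₀eq⟩ : ∃ f : A₀ ⟶ M, f = p₀0 := ⟨p₀0, rfl⟩
  have hp₀ : p = pA ≫ p₀ := by rw [hp₀eq]; exact hp₀0
  obtain ⟨q₀0, hq₀0⟩ := Triangle.coyoneda_exact₂ _ hTB q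
    (w.homZero (w.le_leW hM.1) hBp (by norm_num) _)
  change q = q₀0 ≫ iB at hq₀0
  obtain ⟨q₀, hq₀eq⟩ : ∃ f : M ⟶ B₀, f = q₀0 := ⟨q₀0, rfl⟩
  have hq₀ : q = q₀ ≫ iB := by rw [hq₀eq]; exact hq₀0
  have hpq₀ : p₀ ≫ q₀ = θh ≫ χ ≫ ηi := by
    have h1 : (pA ≫ (p₀ ≫ q₀ - θh ≫ χ ≫ ηi)) ≫ iB = 0 := by
      rw [Preadditive.comp_sub, Preadditive.sub_comp]
      have e1 : (pA ≫ (p₀ ≫ q₀)) ≫ iB = u := by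
        rw [Category.assoc, Category.assoc, ← hq₀, ← Category.assoc, ← hp₀, hpq]
      have e2 : (pA ≫ (θh ≫ χ ≫ ηi)) ≫ iB = u := by
        rw [Category.assoc]; exact hcore
      rw [e1, e2, sub_self]
    have h2 : pA ≫ (p₀ ≫ q₀ - θh ≫ χ ≫ ηi) = 0 := J2 A (w.le_leW hA) _ h1
    have h3 := J1 B₀ hge_B₀w _ h2
    rwa [sub_eq_zero] at h3
  refine ⟨p₀, q₀ ≫ (ηh ≫ inv χ ≫ θi), ?_, ?_, ?_⟩
  · rw [← Category.assoc, hpq₀]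
    exact hφ1
  · rw [hp₀, Category.assoc, ← Category.assoc p₀ q₀, hpq₀, hφ1, Category.comp_id]
  · rw [hq₀, ← Category.assoc, hpq₀]
end

section
/- Let C be a pretriangulated category with weight structure and m ≤ n integers. Let A → M → B → A[1] and A′ → M′ → B′ → A′[1] be distinguished triangles with A, A′ ∈ C_{w≤m−1} and B, B′ ∈ C_{w≥n+1} (i.e. weight filtrations of M and M′ avoiding weights m,…,n). Then every morphism f : M → M′ extends to a morphism of triangles (a, f, b) with a : A → A′ and b : B → B′, and the morphisms a and b are uniquely determined by f. In particular, a weight filtration of M avoiding weights m,…,n is unique up to unique isomorphism. (Functoriality of weight filtrations avoiding weights, used throughout the paper; cf. [W4, Prop. 1.7, Cor. 1.9].) -/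
set_option linter.unusedVariables false

open CategoryTheory Limits Pretriangulated

universe w₁ w₂ w₃ w₄ v₁ v₂ v₃ v₄ u₁ u₂ u₃ u₄

section Aux

variable {C : Type*} [Category C] [HasZeroObject C] [Preadditive C]
    [HasShift C ℤ] [∀ n : ℤ, (shiftFunctor C n).Additive] [Pretriangulated C]

lemma WeightStructure.ge_shift_mono (w : WeightStructure C) (X : C) (a b : ℤ) (hab : a ≤ b)
    (hX : w.ge (X⟦a⟧)) : w.ge (X⟦b⟧) := by
  have key : ∀ k : ℕ, w.ge (X⟦a + (k : ℤ)⟧) := by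
    intro k
    induction k with
    | zero => simpa using hX
    | succ k ih =>
      have : w.ge (X⟦a + (k : ℤ) + 1⟧) :=
        w.ge_iso ((shiftFunctorAdd' C (a + (k : ℤ)) 1 (a + (k : ℤ) + 1) rfl).app X).symm
          (w.ge_shift _ ih)
      convert this using 3
      push_cast
      ring
  obtain ⟨k, hk⟩ : ∃ k : ℕ, b = a + (k : ℤ) := ⟨(b - a).toNat, by omega⟩
  rw [hk]
  exact key k

lemma WeightStructure.hom_eq_zero (w : WeightStructure C) {X Y : C} {p q : ℤ} (hpq : p < q)
    (hX : w.le (X⟦(-p : ℤ)⟧)) (hY : w.ge (Y⟦(-q : ℤ)⟧)) (φ : X ⟶ Y) : φ = 0 := by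
  have hY' : w.ge (Y⟦(-p - 1 : ℤ)⟧) := w.ge_shift_mono Y (-q) (-p - 1) (by omega) hY
  have e := (shiftFunctorAdd' C (-p - 1) 1 (-p) (by ring)).app Y
  have hz : (shiftFunctor C (-p : ℤ)).map φ ≫ e.hom = 0 := w.orth _ hX hY'
  have : (shiftFunctor C (-p : ℤ)).map φ = 0 := by
    have := hz =≫ e.inv
    simpa using this
  apply (shiftFunctor C (-p : ℤ)).map_injective
  simpa using this

end Aux

/-- **Functoriality and uniqueness of weight filtrations avoiding weights `m, …, n`**
(cf. [W4, Prop. 1.7, Cor. 1.9]). Given two weight filtrations avoiding weights `m, …, n`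
of `M` and `M'`, every morphism `φ : M → M'` extends to a morphism of triangles
`(a, φ, b)`, and `a`, `b` are uniquely determined by `φ`. -/
theorem weight_filtration_functoriality
    {C : Type*} [Category C] [HasZeroObject C] [Preadditive C]
    [HasShift C ℤ] [∀ n : ℤ, (shiftFunctor C n).Additive] [Pretriangulated C]
    (w : WeightStructure C) (m n : ℤ) (hmn : m ≤ n)
    (A M B : C) (f : A ⟶ M) (g : M ⟶ B) (h : B ⟶ A⟦(1 : ℤ)⟧)
    (hT : Triangle.mk f g h ∈ distTriang C)
    (A' M' B' : C) (f' : A' ⟶ M') (g' : M' ⟶ B') (h' : B' ⟶ A'⟦(1 : ℤ)⟧)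
    (hT' : Triangle.mk f' g' h' ∈ distTriang C)
    (hA : w.leW (m - 1) A) (hA' : w.leW (m - 1) A')
    (hB : w.geW (n + 1) B) (hB' : w.geW (n + 1) B')
    (φ : M ⟶ M') :
    (∃ (a : A ⟶ A') (b : B ⟶ B'),
      a ≫ f' = f ≫ φ ∧ g ≫ b = φ ≫ g' ∧
        h ≫ (shiftFunctor C (1 : ℤ)).map a = b ≫ h') ∧
    (∀ a₁ a₂ : A ⟶ A', a₁ ≫ f' = f ≫ φ → a₂ ≫ f' = f ≫ φ → a₁ = a₂) ∧
    (∀ b₁ b₂ : B ⟶ B', g ≫ b₁ = φ ≫ g' → g ≫ b₂ = φ ≫ g' → b₁ = b₂) := by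
  refine ⟨?_, ?_, ?_⟩
  · -- existence
    have h0 : (f ≫ φ) ≫ g' = 0 := by
      rw [Category.assoc]
      exact w.hom_eq_zero (p := m - 1) (q := n + 1) (by omega) hA hB' (f ≫ φ ≫ g')
    obtain ⟨a, ha⟩ := Triangle.coyoneda_exact₂ _ hT' (f ≫ φ) h0
    obtain ⟨b, hb₁, hb₂⟩ := Pretriangulated.complete_distinguished_triangle_morphism
      (Triangle.mk f g h) (Triangle.mk f' g' h') hT hT' a φ ha
    exact ⟨a, b, ha.symm, hb₁, hb₂⟩
  · -- uniqueness of a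
    intro a₁ a₂ h₁ h₂
    have hd : (a₁ - a₂) ≫ f' = 0 := by
      rw [Preadditive.sub_comp, h₁, h₂, sub_self]
    obtain ⟨e, he⟩ := Triangle.coyoneda_exact₂ _
      (inv_rot_of_distTriang _ hT') (a₁ - a₂) hd
    have he0 : e = 0 := by
      refine w.hom_eq_zero (p := m - 1) (q := n) (by omega) hA ?_ e
      exact w.ge_iso ((shiftFunctorAdd' C (-1) (-n) (-(n + 1)) (by ring)).app B')
        (by simpa [WeightStructure.geW] using hB')
    rw [he0, zero_comp] at he
    exact sub_eq_zero.mp he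
  · -- uniqueness of b
    intro b₁ b₂ h₁ h₂
    have hd : g ≫ (b₁ - b₂) = 0 := by
      rw [Preadditive.comp_sub, h₁, h₂, sub_self]
    obtain ⟨e, he⟩ := Triangle.yoneda_exact₃ _ hT (b₁ - b₂) hd
    have he0 : e = 0 := by
      refine w.hom_eq_zero (p := m) (q := n + 1) (by omega) ?_ hB' e
      exact w.le_iso ((shiftFunctorAdd' C (1 : ℤ) (-m) (-(m - 1)) (by ring)).app A)
        (by simpa [WeightStructure.leW] using hA)
    rw [he0, comp_zero] at he
    exact sub_eq_zero.mp he
end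

section
/- Let C(U), C(X), C(Z) be pretriangulated categories related by gluing. Then for every object M_U of C(U) there is an isomorphism i^!(j_! M_U) ≅ (i^* j_* M_U)[−1], natural in M_U; that is, the functors i^! ∘ j_! and (i^* ∘ j_*)[−1] from C(U) to C(Z) are isomorphic. (The identity i^! ∘ j_! ≅ i^* ∘ j_* [−1] used in Remark 0Ca.) -/
set_option linter.unusedVariables false

open CategoryTheory Limits Pretriangulated

universe w₁ w₂ w₃ w₄ v₁ v₂ v₃ v₄ u₁ u₂ u₃ u₄

variable {CU : Type*} [Category CU] [HasZeroObject CU] [Preadditive CU]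
  [HasShift CU ℤ] [∀ n : ℤ, (shiftFunctor CU n).Additive] [Pretriangulated CU]
variable {CX : Type*} [Category CX] [HasZeroObject CX] [Preadditive CX]
  [HasShift CX ℤ] [∀ n : ℤ, (shiftFunctor CX n).Additive] [Pretriangulated CX]
variable {CZ : Type*} [Category CZ] [HasZeroObject CZ] [Preadditive CZ]
  [HasShift CZ ℤ] [∀ n : ℤ, (shiftFunctor CZ n).Additive] [Pretriangulated CZ]

/- The six gluing functors: `jl = j_!`, `js = j^*`, `jr = j_*`,
   `il = i^*`, `im = i_*`, `ir = i^!`; all of them are exact. -/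
variable (jl : CU ⥤ CX) (js : CX ⥤ CU) (jr : CU ⥤ CX)
  (il : CX ⥤ CZ) (im : CZ ⥤ CX) (ir : CX ⥤ CZ)
  [jl.CommShift ℤ] [jl.IsTriangulated] [js.CommShift ℤ] [js.IsTriangulated]
  [jr.CommShift ℤ] [jr.IsTriangulated] [il.CommShift ℤ] [il.IsTriangulated]
  [im.CommShift ℤ] [im.IsTriangulated] [ir.CommShift ℤ] [ir.IsTriangulated]
  [im.Full] [im.Faithful]
variable (adj₁ : jl ⊣ js) (adj₂ : js ⊣ jr) (adj₃ : il ⊣ im) (adj₄ : im ⊣ ir)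

variable (wU : WeightStructure CU) (wX : WeightStructure CX) (wZ : WeightStructure CZ)

@[simp] theorem tri_mk_obj₁' {C : Type*} [Category C] [HasShift C ℤ] {X Y Z : C} (f : X ⟶ Y)
    (g : Y ⟶ Z) (h : Z ⟶ X⟦(1:ℤ)⟧) : (Triangle.mk f g h).obj₁ = X := rfl

@[simp] theorem tri_mk_obj₂' {C : Type*} [Category C] [HasShift C ℤ] {X Y Z : C} (f : X ⟶ Y)
    (g : Y ⟶ Z) (h : Z ⟶ X⟦(1:ℤ)⟧) : (Triangle.mk f g h).obj₂ = Y := rfl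

@[simp] theorem tri_mk_obj₃' {C : Type*} [Category C] [HasShift C ℤ] {X Y Z : C} (f : X ⟶ Y)
    (g : Y ⟶ Z) (h : Z ⟶ X⟦(1:ℤ)⟧) : (Triangle.mk f g h).obj₃ = Z := rfl

@[simp] theorem tri_mk_mor₁' {C : Type*} [Category C] [HasShift C ℤ] {X Y Z : C} (f : X ⟶ Y)
    (g : Y ⟶ Z) (h : Z ⟶ X⟦(1:ℤ)⟧) : (Triangle.mk f g h).mor₁ = f := rfl

@[simp] theorem tri_mk_mor₂' {C : Type*} [Category C] [HasShift C ℤ] {X Y Z : C} (f : X ⟶ Y)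
    (g : Y ⟶ Z) (h : Z ⟶ X⟦(1:ℤ)⟧) : (Triangle.mk f g h).mor₂ = g := rfl

@[simp] theorem tri_mk_mor₃' {C : Type*} [Category C] [HasShift C ℤ] {X Y Z : C} (f : X ⟶ Y)
    (g : Y ⟶ Z) (h : Z ⟶ X⟦(1:ℤ)⟧) : (Triangle.mk f g h).mor₃ = h := rfl

@[simp] theorem tri_rotate_obj₁' {C : Type*} [Category C] [Preadditive C] [HasShift C ℤ]
    [∀ n : ℤ, (shiftFunctor C n).Additive] (T : Triangle C) : T.rotate.obj₁ = T.obj₂ := rfl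

@[simp] theorem tri_rotate_obj₂' {C : Type*} [Category C] [Preadditive C] [HasShift C ℤ]
    [∀ n : ℤ, (shiftFunctor C n).Additive] (T : Triangle C) : T.rotate.obj₂ = T.obj₃ := rfl

@[simp] theorem tri_rotate_obj₃' {C : Type*} [Category C] [Preadditive C] [HasShift C ℤ]
    [∀ n : ℤ, (shiftFunctor C n).Additive] (T : Triangle C) : T.rotate.obj₃ = T.obj₁⟦(1:ℤ)⟧ := rfl

@[simp] theorem tri_rotate_mor₁' {C : Type*} [Category C] [Preadditive C] [HasShift C ℤ]
    [∀ n : ℤ, (shiftFunctor C n).Additive] (T : Triangle C) : T.rotate.mor₁ = T.mor₂ := rfl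

@[simp] theorem tri_rotate_mor₂' {C : Type*} [Category C] [Preadditive C] [HasShift C ℤ]
    [∀ n : ℤ, (shiftFunctor C n).Additive] (T : Triangle C) : T.rotate.mor₂ = T.mor₃ := rfl

@[simp] theorem tri_rotate_mor₃' {C : Type*} [Category C] [Preadditive C] [HasShift C ℤ]
    [∀ n : ℤ, (shiftFunctor C n).Additive] (T : Triangle C) : T.rotate.mor₃ = -T.mor₁⟦(1:ℤ)⟧' := rfl

/-- **The identity `i^! ∘ j_! ≅ i^* ∘ j_* [-1]` used in Remark 0Ca.** In a gluing
situation, the functors `i^! ∘ j_!` and `(i^* ∘ j_*)[-1]` from `C(U)` to `C(Z)` are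
isomorphic; in particular `i^!(j_! M_U) ≅ (i^* j_* M_U)[-1]`, naturally in `M_U`. -/
theorem ir_jl_iso_il_jr_shift
    (hglue : IsGluing jl js jr il im ir adj₁ adj₂ adj₃ adj₄) :
    Nonempty (jl ⋙ ir ≅ (jr ⋙ il) ⋙ shiftFunctor CZ (-1 : ℤ)) := by
  obtain ⟨hz, hu, hc, htri₁, htri₂⟩ := hglue
  haveI := hu
  haveI := hc
  choose δ₂ hδ₂ using fun M : CU => htri₂ (jl.obj M)
  choose δ₁ hδ₁ using fun M : CU => htri₁ (jr.obj M)
  -- the canonical natural map `φ : j_! M ⟶ j_* M`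
  let φ : ∀ M : CU, jl.obj M ⟶ jr.obj M := fun M =>
    adj₂.unit.app (jl.obj M) ≫ jr.map (inv (adj₁.unit.app M))
  have hinv : ∀ {M N : CU} (f : M ⟶ N),
      js.map (jl.map f) ≫ inv (adj₁.unit.app N) = inv (adj₁.unit.app M) ≫ f := by
    intro M N f
    have h := adj₁.unit.naturality f
    dsimp at h
    rw [IsIso.comp_inv_eq, Category.assoc, h, IsIso.inv_hom_id_assoc]
  have φnat : ∀ {M N : CU} (f : M ⟶ N), jl.map f ≫ φ N = φ M ≫ jr.map f := by
    intro M N f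
    have h := adj₂.unit.naturality (jl.map f)
    dsimp at h
    dsimp only [φ]
    rw [← Category.assoc, h, Category.assoc, ← jr.map_comp, hinv f, jr.map_comp,
      Category.assoc]
  have φeq : ∀ M : CU, jl.map (adj₂.counit.app M) ≫ φ M = adj₁.counit.app (jr.obj M) := by
    intro M
    have huK : js.map (adj₁.counit.app (jr.obj M))
        = inv (adj₁.unit.app (js.obj (jr.obj M))) :=
      (IsIso.inv_eq_of_hom_inv_id (adj₁.right_triangle_components (jr.obj M))).symm
    have h1 := adj₂.unit.naturality (jl.map (adj₂.counit.app M))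
    dsimp at h1
    have h2 := adj₂.unit.naturality (adj₁.counit.app (jr.obj M))
    dsimp at h2
    have h3 := adj₂.right_triangle_components M
    have hc' : js.map (jl.map (adj₂.counit.app M)) ≫ inv (adj₁.unit.app M)
        = inv (adj₁.unit.app (js.obj (jr.obj M))) ≫ adj₂.counit.app M :=
      hinv (adj₂.counit.app M)
    dsimp only [φ]
    rw [← Category.assoc, h1, Category.assoc, ← jr.map_comp, hc', ← huK, jr.map_comp,
      ← Category.assoc, ← h2, Category.assoc, h3, Category.comp_id]
  -- the first triangle, rewritten on φ
  have hT1 : ∀ M : CU, Triangle.mk (adj₄.counit.app (jl.obj M)) (φ M)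
      (jr.map (adj₁.unit.app M) ≫ δ₂ M) ∈ distTriang CX := by
    intro M
    refine isomorphic_distinguished _ (hδ₂ M) _ ?_
    refine Triangle.isoMk _ _ (Iso.refl _) (Iso.refl _)
      (jr.mapIso (asIso (adj₁.unit.app M))) (by simp) ?_ (by simp)
    dsimp only [φ, tri_mk_obj₂', tri_mk_obj₃', tri_mk_mor₂', Iso.refl_hom,
      Functor.mapIso_hom, asIso_hom]
    rw [Category.id_comp, Category.assoc, ← jr.map_comp, IsIso.inv_hom_id, jr.map_id]
    simp
  -- the second triangle, rewritten on φ
  have hT2 : ∀ M : CU, Triangle.mk (φ M) (adj₃.unit.app (jr.obj M))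
      (δ₁ M ≫ (shiftFunctor CX (1:ℤ)).map (jl.map (adj₂.counit.app M))) ∈ distTriang CX := by
    intro M
    refine isomorphic_distinguished _ (hδ₁ M) _ ?_
    refine Triangle.isoMk _ _ ((jl.mapIso (asIso (adj₂.counit.app M))).symm)
      (Iso.refl _) (Iso.refl _) ?_ (by simp) ?_
    · dsimp
      rw [Category.comp_id, ← φeq M, ← Category.assoc, ← jl.map_comp,
        IsIso.inv_hom_id, jl.map_id, Category.id_comp]
    · dsimp
      rw [Category.id_comp, Category.assoc, ← Functor.map_comp, ← jl.map_comp,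
        IsIso.hom_inv_id, jl.map_id]
      simp
  have hR : ∀ M : CU, (Triangle.mk (adj₄.counit.app (jl.obj M)) (φ M)
      (jr.map (adj₁.unit.app M) ≫ δ₂ M)).rotate ∈ distTriang CX :=
    fun M => rot_of_distTriang _ (hT1 M)
  -- the comparison isomorphism between the cones
  have main : ∀ M : CU, ∃ eM : ((im.obj (ir.obj (jl.obj M)))⟦(1:ℤ)⟧ ⟶
      im.obj (il.obj (jr.obj M))), IsIso eM ∧
      ((jr.map (adj₁.unit.app M) ≫ δ₂ M) ≫ eM = adj₃.unit.app (jr.obj M)) ∧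
      (eM ≫ (δ₁ M ≫ (shiftFunctor CX (1:ℤ)).map (jl.map (adj₂.counit.app M)))
        = -(shiftFunctor CX (1:ℤ)).map (adj₄.counit.app (jl.obj M))) := by
    intro M
    obtain ⟨E, hE1, hE2⟩ := exists_iso_of_arrow_iso _ _ (hR M) (hT2 M)
      (Arrow.isoMk (Iso.refl _) (Iso.refl _) (by simp))
    refine ⟨E.hom.hom₃, ?_, ?_, ?_⟩
    · exact (inferInstance : IsIso (Triangle.π₃.map E.hom))
    · have h := E.hom.comm₂
      rw [hE2] at h
      simpa using h
    · have h := E.hom.comm₃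
      rw [hE1] at h
      simp only [Triangle.rotate_mor₃, Triangle.mk_mor₁, Triangle.mk_mor₃, Arrow.isoMk_hom_left,
        Iso.refl_hom, CategoryTheory.Functor.map_id, Category.comp_id] at h
      refine h.symm.trans ?_
      exact (congrArg _ ((shiftFunctor CX (1:ℤ)).map_id _)).trans (Category.comp_id _)
  choose e he P1 P2 using main
  -- vanishing of Homs
  have L0 : ∀ (X : CU) (W : CZ) (h : jl.obj X ⟶ im.obj W), h = 0 := by
    intro X W h
    have h0 : (adj₁.homEquiv X (im.obj W)) h = 0 := (hz W).eq_of_tgt _ _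
    have h1 := (adj₁.homEquiv X (im.obj W)).symm_apply_apply h
    rw [h0] at h1
    rw [← h1, Adjunction.homEquiv_counit, Functor.map_zero, zero_comp]
  have L0' : ∀ (W : CZ) (X : CU) (h : im.obj W ⟶ jr.obj X), h = 0 := by
    intro W X h
    have h0 : (adj₂.homEquiv (im.obj W) X).symm h = 0 := (hz W).eq_of_src _ _
    have h1 := (adj₂.homEquiv (im.obj W) X).apply_symm_apply h
    rw [h0] at h1
    rw [← h1, Adjunction.homEquiv_unit, Functor.map_zero, comp_zero]
  -- uniqueness of fill-ins, via the vanishing above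
  have U1 : ∀ (M N : CU)
      (x x' : (im.obj (ir.obj (jl.obj M)))⟦(1:ℤ)⟧ ⟶ im.obj (il.obj (jr.obj N))),
      (jr.map (adj₁.unit.app M) ≫ δ₂ M) ≫ x = (jr.map (adj₁.unit.app M) ≫ δ₂ M) ≫ x'
      → x = x' := by
    intro M N x x' hxx
    have hd : (Triangle.mk (adj₄.counit.app (jl.obj M)) (φ M)
        (jr.map (adj₁.unit.app M) ≫ δ₂ M)).rotate.mor₂ ≫ (x - x') = 0 := by
      dsimp
      rw [Preadditive.comp_sub, hxx, sub_self]
      rfl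
    obtain ⟨g, hg⟩ := Triangle.yoneda_exact₃ _ (hR M) (x - x') hd
    have hg0 : g = 0 := by
      have h1 : (jl.commShiftIso (1:ℤ)).hom.app M ≫ g = 0 := L0 _ _ _
      have h2 : g = (jl.commShiftIso (1:ℤ)).inv.app M
          ≫ ((jl.commShiftIso (1:ℤ)).hom.app M ≫ g) :=
        (Iso.inv_hom_id_app_assoc (jl.commShiftIso (1:ℤ)) M g).symm
      rw [h2, h1, comp_zero]
      rfl
    rw [hg0, comp_zero] at hg
    exact sub_eq_zero.mp hg
  have U2 : ∀ (M N : CU)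
      (x x' : (im.obj (ir.obj (jl.obj M)))⟦(1:ℤ)⟧ ⟶ im.obj (il.obj (jr.obj N))),
      x ≫ (δ₁ N ≫ (shiftFunctor CX (1:ℤ)).map (jl.map (adj₂.counit.app N)))
        = x' ≫ (δ₁ N ≫ (shiftFunctor CX (1:ℤ)).map (jl.map (adj₂.counit.app N)))
      → x = x' := by
    intro M N x x' hxx
    have hd : (x - x') ≫ (Triangle.mk (φ N) (adj₃.unit.app (jr.obj N))
        (δ₁ N ≫ (shiftFunctor CX (1:ℤ)).map (jl.map (adj₂.counit.app N)))).mor₃ = 0 := by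
      dsimp
      rw [Preadditive.sub_comp, hxx, sub_self]
      rfl
    obtain ⟨g, hg⟩ := Triangle.coyoneda_exact₃ _ (hT2 N) (x - x') hd
    have hg0 : g = 0 := by
      have h1 : (im.commShiftIso (1:ℤ)).hom.app (ir.obj (jl.obj M)) ≫ g = 0 := L0' _ _ _
      have h2 : g = (im.commShiftIso (1:ℤ)).inv.app (ir.obj (jl.obj M))
          ≫ ((im.commShiftIso (1:ℤ)).hom.app (ir.obj (jl.obj M)) ≫ g) := by
        rw [← Category.assoc, Iso.inv_hom_id_app, Category.id_comp]
      rw [h2, h1, comp_zero]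
    rw [hg0, zero_comp] at hg
    exact sub_eq_zero.mp hg
  -- naturality of e
  have key : ∀ {M N : CU} (f : M ⟶ N),
      (shiftFunctor CX (1:ℤ)).map (im.map (ir.map (jl.map f))) ≫ e N
        = e M ≫ im.map (il.map (jr.map f)) := by
    intro M N f
    obtain ⟨x₀, hx₁, hx₂⟩ := complete_distinguished_triangle_morphism
      ((Triangle.mk (adj₄.counit.app (jl.obj M)) (φ M)
        (jr.map (adj₁.unit.app M) ≫ δ₂ M)).rotate)
      (Triangle.mk (φ N) (adj₃.unit.app (jr.obj N))
        (δ₁ N ≫ (shiftFunctor CX (1:ℤ)).map (jl.map (adj₂.counit.app N))))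
      (hR M) (hT2 N) (jl.map f) (jr.map f) (by dsimp; exact (φnat f).symm)
    dsimp at hx₁ hx₂
    have h2 : e M ≫ im.map (il.map (jr.map f)) = x₀ := by
      apply U1 M N
      rw [hx₁, ← Category.assoc, P1 M]
      have h := adj₃.unit.naturality (jr.map f)
      dsimp at h
      exact h.symm
    have h1 : (shiftFunctor CX (1:ℤ)).map (im.map (ir.map (jl.map f))) ≫ e N = x₀ := by
      apply U2 M N
      rw [← hx₂, Category.assoc, P2 N, Preadditive.comp_neg]
      refine Eq.trans ?_ (Preadditive.neg_comp _ _).symm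
      congr 1
      rw [← Functor.map_comp, ← Functor.map_comp]
      have h := adj₄.counit.naturality (jl.map f)
      dsimp at h
      rw [h]
    rw [h1, h2]
  -- assemble the natural isomorphism
  refine ⟨NatIso.ofComponents (fun M => im.preimageIso
    ((shiftFunctorCompIsoId CX (1:ℤ) (-1:ℤ) (by ring)).symm.app (im.obj (ir.obj (jl.obj M)))
      ≪≫ (shiftFunctor CX (-1:ℤ)).mapIso (@asIso _ _ _ _ (e M) (he M))
      ≪≫ ((im.commShiftIso (-1:ℤ)).app (il.obj (jr.obj M))).symm)) ?_⟩
  intro M N f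
  apply im.map_injective
  simp only [Functor.comp_map, Functor.map_comp, Functor.preimageIso_hom,
    Functor.map_preimage, Iso.trans_hom, Iso.symm_hom, Iso.app_hom, Iso.app_inv,
    Functor.mapIso_hom, asIso_hom]
  have n1 := (shiftFunctorCompIsoId CX (1:ℤ) (-1:ℤ) (by ring)).inv.naturality
    (im.map (ir.map (jl.map f)))
  dsimp at n1
  have n3 := (im.commShiftIso (-1:ℤ)).inv.naturality (il.map (jr.map f))
  dsimp at n3
  rw [← Category.assoc, n1, Category.assoc]
  rw [← Category.assoc ((shiftFunctor CX (-1:ℤ)).map _), ← Functor.map_comp, key f,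
    Functor.map_comp]
  simp only [Category.assoc]
  rw [← n3]
end
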